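/- arXiv:2101.06604 — 8 statements merged into one kernel-verified Lean document; each statement's English description precedes it below -/
import Mathlib

section
/- Let G be a finite group, H a normal subgroup of prime index p, F a field, V an irreducible FH-module, and a ∈ G \ H. If the F-representation σ of H afforded by V is not G-stable (i.e., σ is not equivalent to its a-conjugate h ↦ σ(a h a⁻¹)), then the endomorphism algebra of the induced FG-module V↑G is isomorphic to Δ = End_{FH}(V). -/
open LinearMap

set_option maxHeartbeats 1600000

/-- Non-stable case: if `H ⊴ G` has prime index `p`, `V` is an irreducible `FH`-module
with representation `σ`, `a ∈ G \ H`, the induced `FG`-module `V↑G` is modeled by `W`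
(via an injective `H`-equivariant `ι : V → W` with `W = ⊕_{i<p} τ(a)^i ι(V)`), and `σ`
is not equivalent to its `a`-conjugate, then `End_{FG}(V↑G) ≅ End_{FH}(V) = Δ`. -/
theorem stmt0 {F : Type*} [Field F] {G : Type*} [Group G] [Finite G]
    {V W : Type*} [AddCommGroup V] [Module F V] [AddCommGroup W] [Module F W]
    (H : Subgroup G) (hN : H.Normal) (p : ℕ) (hp : p.Prime) (hidx : H.index = p)
    (σ : Representation F H V) (τ : Representation F G W)
    [Nontrivial V]
    (hirr : ∀ U : Submodule F V, (∀ h : H, ∀ v ∈ U, σ h v ∈ U) → U = ⊥ ∨ U = ⊤)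
    (a : G) (ha : a ∉ H)
    (ι : V →ₗ[F] W) (hinj : Function.Injective ι)
    (hequiv : ∀ h : H, τ h ∘ₗ ι = ι ∘ₗ σ h)
    (hint : DirectSum.IsInternal fun i : Fin p =>
      Submodule.map (τ (a ^ (i : ℕ))) (LinearMap.range ι))
    (hns : ¬ ∃ α : V ≃ₗ[F] V, ∀ h : H,
      σ ⟨a * ↑h * a⁻¹, hN.conj_mem ↑h h.2 a⟩ ∘ₗ (α : V →ₗ[F] V) =
        (α : V →ₗ[F] V) ∘ₗ σ h) :
    Nonempty
      ((Subalgebra.centralizer F (Set.range fun g : G => (τ g : Module.End F W))) ≃ₐ[F]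
        (Subalgebra.centralizer F (Set.range fun h : H => (σ h : Module.End F V)))) := by
  classical
  haveI : NeZero p := ⟨hp.ne_zero⟩
  -- congruence for σ at equal group elements
  have hσc : ∀ {x y : G} (hx : x ∈ H) (hy : y ∈ H), x = y →
      σ ⟨x, hx⟩ = σ ⟨y, hy⟩ := by
    rintro x y hx hy rfl; rfl
  -- τ cancellation facts
  have hτc : ∀ (g : G) (w : W), τ g⁻¹ (τ g w) = w := by
    intro g w
    rw [← Module.End.mul_apply, ← map_mul, inv_mul_cancel, map_one, Module.End.one_apply]
  have hτc2 : ∀ (g : G) (w : W), τ g (τ g⁻¹ w) = w := by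
    intro g w
    have := hτc g⁻¹ w
    rwa [inv_inv] at this
  -- the twisted embeddings
  set ψ : ℕ → (V →ₗ[F] W) := fun k => τ (a ^ k) ∘ₗ ι with hψdef
  have hψapp : ∀ (k : ℕ) (v : V), ψ k v = τ (a ^ k) (ι v) := fun k v => rfl
  have hψinj : ∀ k : ℕ, Function.Injective (ψ k) := by
    intro k v v' hv
    apply hinj
    have h2 := congrArg (τ (a ^ k)⁻¹) hv
    rwa [hψapp, hψapp, hτc, hτc] at h2
  set A : Fin p → Submodule F W :=
    fun i => Submodule.map (τ (a ^ (i : ℕ))) (LinearMap.range ι) with hAdef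
  have hrange : ∀ i : Fin p, A i = LinearMap.range (ψ (i : ℕ)) := by
    intro i
    rw [hψdef, LinearMap.range_comp]
  -- H-equivariance of ι, pointwise
  have hequiv' : ∀ (h : H) (v : V), τ ↑h (ι v) = ι (σ h v) := by
    intro h v
    exact DFunLike.congr_fun (hequiv h) v
  -- conjugation facts
  have hconj : ∀ (k : ℕ) (h : H), (a ^ k)⁻¹ * ↑h * a ^ k ∈ H := by
    intro k h
    have := hN.conj_mem ↑h h.2 (a ^ k)⁻¹
    rwa [inv_inv] at this
  have hconjmem : ∀ (g : G) (h : H), g⁻¹ * ↑h * g ∈ H := by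
    intro g h
    have := hN.conj_mem ↑h h.2 g⁻¹
    rwa [inv_inv] at this
  have hστ : ∀ (k : ℕ) (h : H) (v : V),
      τ ↑h (ψ k v) = ψ k (σ ⟨(a ^ k)⁻¹ * ↑h * a ^ k, hconj k h⟩ v) := by
    intro k h v
    rw [hψapp, hψapp, ← hequiv' ⟨_, hconj k h⟩, ← Module.End.mul_apply, ← Module.End.mul_apply,
      ← map_mul, ← map_mul]
    have : (↑h : G) * a ^ k = a ^ k * ((a ^ k)⁻¹ * ↑h * a ^ k) := by group
    rw [this]
  -- order facts in G/H
  have hqcard : Nat.card (G ⧸ H) = p := by rw [← hidx]; rfl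
  have horder : orderOf ((a : G ⧸ H)) = p := by
    have hd : orderOf ((a : G ⧸ H)) ∣ p := hqcard ▸ orderOf_dvd_natCard _
    rcases hp.eq_one_or_self_of_dvd _ hd with h1 | h1
    · exact absurd ((QuotientGroup.eq_one_iff a).mp (orderOf_eq_one_iff.mp h1)) ha
    · exact h1
  have hpow : ∀ k : ℕ, a ^ k ∈ H ↔ p ∣ k := by
    intro k
    have hcast : ((a ^ k : G) : G ⧸ H) = (a : G ⧸ H) ^ k := by
      exact (QuotientGroup.mk' H).map_pow a k
    rw [← QuotientGroup.eq_one_iff, hcast, ← horder, orderOf_dvd_iff_pow_eq_one]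
  have hap : a ^ p ∈ H := (hpow p).2 dvd_rfl
  -- no intermediate subgroups
  have hbetween : ∀ K : Subgroup G, H ≤ K → K = H ∨ K = ⊤ := by
    intro K hHK
    have hd : K.index ∣ p := hidx ▸ Subgroup.index_dvd_of_le hHK
    rcases hp.eq_one_or_self_of_dvd _ hd with h1 | h1
    · right; exact Subgroup.index_eq_one.mp h1
    · left
      have hrel := Subgroup.relIndex_mul_index hHK
      rw [h1, hidx] at hrel
      have h2 : H.relIndex K = 1 := by
        have := Nat.eq_of_mul_eq_mul_right hp.pos (hrel.trans (one_mul p).symm)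
        exact this
      exact le_antisymm (Subgroup.relIndex_eq_one.mp h2) hHK
  -- the stabilizer subgroup T
  set T : Subgroup G :=
    { carrier := {g : G | ∃ α : V ≃ₗ[F] V, ∀ (h : H) (v : V),
        σ ⟨g * ↑h * g⁻¹, hN.conj_mem ↑h h.2 g⟩ (α v) = α (σ h v)}
      one_mem' := by
        refine ⟨LinearEquiv.refl F V, fun h v => ?_⟩
        have h1 : σ ⟨1 * ↑h * 1⁻¹, hN.conj_mem ↑h h.2 1⟩ = σ h :=
          hσc _ h.2 (by group)
        rw [h1]; rfl
      mul_mem' := by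
        rintro g₁ g₂ ⟨α₁, h₁⟩ ⟨α₂, h₂⟩
        refine ⟨α₂.trans α₁, fun h v => ?_⟩
        have e1 : σ ⟨g₁ * g₂ * ↑h * (g₁ * g₂)⁻¹, hN.conj_mem ↑h h.2 (g₁ * g₂)⟩ =
            σ ⟨g₁ * ↑(⟨g₂ * ↑h * g₂⁻¹, hN.conj_mem ↑h h.2 g₂⟩ : H) * g₁⁻¹,
              hN.conj_mem _ (hN.conj_mem ↑h h.2 g₂) g₁⟩ :=
          hσc _ _ (by group)
        show σ _ (α₁ (α₂ v)) = α₁ (α₂ (σ h v))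
        rw [e1, h₁ _ (α₂ v), h₂]
      inv_mem' := by
        rintro g ⟨α, hα⟩
        refine ⟨α.symm, fun h v => ?_⟩
        apply α.injective
        have h2 := hα ⟨g⁻¹ * ↑h * g, hconjmem g h⟩ (α.symm v)
        have e1 : σ ⟨g * ↑(⟨g⁻¹ * ↑h * g, hconjmem g h⟩ : H) * g⁻¹,
            hN.conj_mem _ (hconjmem g h) g⟩ = σ h := hσc _ h.2 (by group)
        rw [α.apply_symm_apply, e1] at h2
        have e2 : σ ⟨g⁻¹ * ↑h * g⁻¹⁻¹, hN.conj_mem ↑h h.2 g⁻¹⟩ =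
            σ ⟨g⁻¹ * ↑h * g, hconjmem g h⟩ := hσc _ _ (by rw [inv_inv])
        rw [e2, ← h2, α.apply_symm_apply] }
    with hTdef
  -- H ≤ T
  have hHT : H ≤ T := by
    intro h₀ hh₀
    set x : H := ⟨h₀, hh₀⟩ with hx
    have pf1 : σ x ∘ₗ σ x⁻¹ = LinearMap.id := by
      ext v
      show σ x (σ x⁻¹ v) = v
      rw [← Module.End.mul_apply, ← map_mul, mul_inv_cancel, map_one, Module.End.one_apply]
    have pf2 : σ x⁻¹ ∘ₗ σ x = LinearMap.id := by
      ext v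
      show σ x⁻¹ (σ x v) = v
      rw [← Module.End.mul_apply, ← map_mul, inv_mul_cancel, map_one, Module.End.one_apply]
    refine ⟨LinearEquiv.ofLinear (σ x) (σ x⁻¹) pf1 pf2, fun h v => ?_⟩
    show σ ⟨h₀ * ↑h * h₀⁻¹, hN.conj_mem ↑h h.2 h₀⟩ (σ x v) = σ x (σ h v)
    rw [← Module.End.mul_apply, ← Module.End.mul_apply, ← map_mul, ← map_mul]
    have e1 : (⟨h₀ * ↑h * h₀⁻¹, hN.conj_mem ↑h h.2 h₀⟩ : H) * x = x * h := by
      apply Subtype.ext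
      show (h₀ * ↑h * h₀⁻¹) * h₀ = h₀ * ↑h
      group
    rw [e1]
  have haT : a ∉ T := by
    rintro ⟨α, hα⟩
    exact hns ⟨α, fun h => LinearMap.ext fun v => hα h v⟩
  have hTeq : T = H := by
    rcases hbetween T hHT with h1 | h1
    · exact h1
    · exact absurd (h1 ▸ Subgroup.mem_top a) haT
  -- the projections
  set e : (DirectSum (Fin p) (fun i => ↥(A i))) ≃ₗ[F] W :=
    LinearEquiv.ofBijective (DirectSum.coeLinearMap A) hint with hedef
  set π : Fin p → (W →ₗ[F] W) := fun j =>
    (A j).subtype ∘ₗ (DirectSum.component F (Fin p) (fun i => ↥(A i)) j) ∘ₗ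
      (e.symm : W →ₗ[F] DirectSum (Fin p) (fun i => ↥(A i))) with hπdef
  have hπapp : ∀ (j : Fin p) (w : W), π j w = ↑((e.symm w) j) := fun j w => rfl
  have hπmem : ∀ (j : Fin p) (w : W), π j w ∈ A j := by
    intro j w
    rw [hπapp]
    exact ((e.symm w) j).2
  have hπsame : ∀ (j : Fin p) {w : W}, w ∈ A j → π j w = w := by
    intro j w hw
    rw [hπapp, hedef, hint.ofBijective_coeLinearMap_of_mem hw]
  have hπne : ∀ {j k : Fin p}, j ≠ k → ∀ {w : W}, w ∈ A k → π j w = 0 := by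
    intro j k hjk w hw
    rw [hπapp, hedef, hint.ofBijective_coeLinearMap_of_mem_ne (Ne.symm hjk) hw]
    rfl
  have hπsum : ∀ w : W, ∑ j, π j w = w := by
    intro w
    calc ∑ j, π j w
        = ∑ j, DirectSum.coeLinearMap A (DirectSum.of (fun i => ↥(A i)) j ((e.symm w) j)) := by
          refine Finset.sum_congr rfl fun j _ => ?_
          rw [hπapp, DirectSum.coeLinearMap_of]
      _ = DirectSum.coeLinearMap A (∑ j, DirectSum.of (fun i => ↥(A i)) j ((e.symm w) j)) :=
          (map_sum _ _ _).symm
      _ = DirectSum.coeLinearMap A (e.symm w) := by rw [DirectSum.sum_univ_of]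
      _ = e (e.symm w) := rfl
      _ = w := e.apply_symm_apply w
  have hAH : ∀ (i : Fin p) (h : H) {w : W}, w ∈ A i → τ ↑h w ∈ A i := by
    intro i h w hw
    rw [hrange] at hw ⊢
    obtain ⟨v, rfl⟩ := hw
    rw [hστ]
    exact ⟨_, rfl⟩
  have hπτ : ∀ (j : Fin p) (h : H) (w : W), π j (τ ↑h w) = τ ↑h (π j w) := by
    intro j h w
    conv_lhs => rw [← hπsum w, map_sum, map_sum]
    rw [Finset.sum_eq_single j]
    · rw [hπsame j (hAH j h (hπmem j w))]
    · intro k _ hkj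
      exact hπne (Ne.symm hkj) (hAH k h (hπmem k w))
    · intro hj
      exact absurd (Finset.mem_univ j) hj
  have hgen : ∀ f₁ f₂ : W →ₗ[F] W,
      (∀ (i : Fin p) (v : V), f₁ (ψ (i : ℕ) v) = f₂ (ψ (i : ℕ) v)) → f₁ = f₂ := by
    intro f₁ f₂ hf
    ext w
    rw [← hπsum w, map_sum, map_sum]
    refine Finset.sum_congr rfl fun i _ => ?_
    have h2 : π i w ∈ LinearMap.range (ψ (i : ℕ)) := (hrange i) ▸ hπmem i w
    obtain ⟨v, hv⟩ := h2
    rw [← hv, hf]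
  -- Claim 1: any G-equivariant endomorphism preserves ι(V)
  have hstab : ∀ f : W →ₗ[F] W, (∀ (g : G) (w : W), τ g (f w) = f (τ g w)) →
      ∀ v : V, f (ι v) ∈ LinearMap.range ι := by
    intro f hf v0
    have hzero : ∀ j : Fin p, j ≠ 0 → ∀ v : V, π j (f (ι v)) = 0 := by
      intro j hj
      have hmem : ∀ v : V, (π j ∘ₗ f ∘ₗ ι) v ∈ LinearMap.range (ψ (j : ℕ)) := by
        intro v
        exact (hrange j) ▸ hπmem j _
      set eψ := LinearEquiv.ofInjective (ψ (j : ℕ)) (hψinj (j : ℕ)) with heψ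
      set φ : V →ₗ[F] V := (eψ.symm : LinearMap.range (ψ (j : ℕ)) →ₗ[F] V) ∘ₗ
        LinearMap.codRestrict (LinearMap.range (ψ (j : ℕ))) (π j ∘ₗ f ∘ₗ ι) hmem with hφdef
      have hφ : ∀ v, ψ (j : ℕ) (φ v) = π j (f (ι v)) := by
        intro v
        show ψ (j : ℕ) (eψ.symm ⟨(π j ∘ₗ f ∘ₗ ι) v, hmem v⟩) = π j (f (ι v))
        rw [heψ, LinearEquiv.ofInjective_symm_apply]
        rfl
      have hιτ : ∀ (h : H) (v : V), ι (σ h v) = τ ↑h (ι v) := fun h v => (hequiv' h v).symm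
      have hintw : ∀ (h : H) (v : V),
          φ (σ h v) = σ ⟨(a ^ (j : ℕ))⁻¹ * ↑h * a ^ (j : ℕ), hconj _ h⟩ (φ v) := by
        intro h v
        apply hψinj (j : ℕ)
        calc ψ (j : ℕ) (φ (σ h v)) = π j (f (ι (σ h v))) := hφ _
          _ = π j (f (τ ↑h (ι v))) := by rw [hιτ h v]
          _ = π j (τ ↑h (f (ι v))) := by rw [hf]
          _ = τ ↑h (π j (f (ι v))) := hπτ j h _
          _ = τ ↑h (ψ (j : ℕ) (φ v)) := by rw [hφ]
          _ = ψ (j : ℕ) (σ ⟨_, hconj _ h⟩ (φ v)) := hστ _ h _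
      have hφzero : φ = 0 := by
        rcases hirr (LinearMap.ker φ) (by
          intro h v hv
          rw [LinearMap.mem_ker] at hv ⊢
          rw [hintw h v, hv, map_zero]) with hk | hk
        · rcases hirr (LinearMap.range φ) (by
            rintro h u ⟨v, rfl⟩
            refine ⟨σ ⟨(a ^ (j : ℕ)) * ↑h * (a ^ (j : ℕ))⁻¹, hN.conj_mem ↑h h.2 _⟩ v, ?_⟩
            rw [hintw]
            have e2 : σ ⟨(a ^ (j : ℕ))⁻¹ *
                ↑(⟨(a ^ (j : ℕ)) * ↑h * (a ^ (j : ℕ))⁻¹, hN.conj_mem ↑h h.2 _⟩ : H) *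
                  a ^ (j : ℕ), hconj _ _⟩ = σ h := hσc _ h.2 (by group)
            rw [e2]) with hr | hr
          · ext v
            have h2 : φ v ∈ (⊥ : Submodule F V) := hr ▸ LinearMap.mem_range_self φ v
            simpa using h2
          · exfalso
            have hbij : Function.Bijective φ :=
              ⟨LinearMap.ker_eq_bot.mp hk, LinearMap.range_eq_top.mp hr⟩
            have hmemT : (a ^ (j : ℕ))⁻¹ ∈ T := by
              refine ⟨LinearEquiv.ofBijective φ hbij, fun h v => ?_⟩
              show σ ⟨(a ^ (j : ℕ))⁻¹ * ↑h * ((a ^ (j : ℕ))⁻¹)⁻¹, _⟩ (φ v) = φ (σ h v)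
              rw [hintw h v]
              have e3 : σ ⟨(a ^ (j : ℕ))⁻¹ * ↑h * ((a ^ (j : ℕ))⁻¹)⁻¹,
                  hN.conj_mem ↑h h.2 _⟩ =
                  σ ⟨(a ^ (j : ℕ))⁻¹ * ↑h * a ^ (j : ℕ), hconj _ h⟩ :=
                hσc _ _ (by rw [inv_inv])
              rw [e3]
            rw [hTeq] at hmemT
            have h4 : a ^ (j : ℕ) ∈ H := by
              have := H.inv_mem hmemT
              rwa [inv_inv] at this
            have h5 := (hpow _).mp h4
            have h6 : (j : ℕ) = 0 := Nat.eq_zero_of_dvd_of_lt h5 j.isLt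
            exact hj (Fin.ext (by simpa using h6))
        · ext v
          have h2 : v ∈ LinearMap.ker φ := hk ▸ Submodule.mem_top
          simpa using h2
      intro v
      rw [← hφ v, hφzero]
      simp
    have hsum0 : f (ι v0) = π 0 (f (ι v0)) := by
      calc f (ι v0) = ∑ j, π j (f (ι v0)) := (hπsum _).symm
        _ = π 0 (f (ι v0)) := Finset.sum_eq_single 0 (fun j _ hj => hzero j hj v0)
            (fun h2 => absurd (Finset.mem_univ _) h2)
    have h3 : π (0 : Fin p) (f (ι v0)) ∈ LinearMap.range (ψ ((0 : Fin p) : ℕ)) :=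
      (hrange 0) ▸ hπmem 0 (f (ι v0))
    obtain ⟨v', hv'⟩ := h3
    refine ⟨v', ?_⟩
    rw [hsum0, ← hv', hψapp]
    simp
  -- unpack centralizer membership on the W side
  have hfc : ∀ f : (Subalgebra.centralizer F (Set.range fun g : G => (τ g : Module.End F W))),
      ∀ (g : G) (w : W), τ g ((f : Module.End F W) w) = (f : Module.End F W) (τ g w) := by
    intro f g w
    have h2 := (Subalgebra.mem_centralizer_iff F).mp f.2 (τ g) ⟨g, rfl⟩
    exact DFunLike.congr_fun h2 w
  set eι : V ≃ₗ[F] LinearMap.range ι := LinearEquiv.ofInjective ι hinj with heι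
  set Φ₀ : (Subalgebra.centralizer F (Set.range fun g : G => (τ g : Module.End F W))) →
      Module.End F V :=
    fun f => (eι.symm : LinearMap.range ι →ₗ[F] V) ∘ₗ
      LinearMap.codRestrict (LinearMap.range ι) ((f : Module.End F W) ∘ₗ ι)
        (fun v => hstab f (hfc f) v) with hΦ₀
  have hE : ∀ f (v : V), ι (Φ₀ f v) = (f : Module.End F W) (ι v) := by
    intro f v
    show ι (eι.symm ⟨((f : Module.End F W) ∘ₗ ι) v, _⟩) = (f : Module.End F W) (ι v)
    rw [heι, LinearEquiv.ofInjective_symm_apply]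
    rfl
  have hΦmem : ∀ f, Φ₀ f ∈ Subalgebra.centralizer F
      (Set.range fun h : H => (σ h : Module.End F V)) := by
    intro f
    rw [Subalgebra.mem_centralizer_iff]
    rintro x ⟨h, rfl⟩
    ext v
    apply hinj
    show ι (σ h (Φ₀ f v)) = ι (Φ₀ f (σ h v))
    calc ι (σ h (Φ₀ f v)) = τ ↑h (ι (Φ₀ f v)) := (hequiv' h _).symm
      _ = τ ↑h ((f : Module.End F W) (ι v)) := by rw [hE]
      _ = (f : Module.End F W) (τ ↑h (ι v)) := hfc f ↑h _
      _ = (f : Module.End F W) (ι (σ h v)) := by rw [hequiv' h v]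
      _ = ι (Φ₀ f (σ h v)) := (hE f _).symm
  have hsurj : ∀ g : Module.End F V, (∀ (h : H) (v : V), σ h (g v) = g (σ h v)) →
      ∃ f : Module.End F W, f ∈ Subalgebra.centralizer F
        (Set.range fun g' : G => (τ g' : Module.End F W)) ∧ ∀ v : V, f (ι v) = ι (g v) := by
    intro g hgσ
    -- build the inverse endomorphism
    set B : ∀ i : Fin p, ↥(A i) →ₗ[F] W := fun i =>
      ψ (i : ℕ) ∘ₗ g ∘ₗ
        ((LinearEquiv.ofInjective (ψ (i : ℕ)) (hψinj (i : ℕ))).symm :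
          LinearMap.range (ψ (i : ℕ)) →ₗ[F] V) ∘ₗ
        ((LinearEquiv.ofEq _ _ (hrange i)) : ↥(A i) →ₗ[F] ↥(LinearMap.range (ψ (i : ℕ)))) with hB
    set fg : W →ₗ[F] W := (DirectSum.toModule F (Fin p) W B) ∘ₗ
      (e.symm : W →ₗ[F] DirectSum (Fin p) (fun i => ↥(A i))) with hfgdef
    have hmemA : ∀ (i : Fin p) (v : V), ψ (i : ℕ) v ∈ A i := by
      intro i v
      rw [hrange i]
      exact LinearMap.mem_range_self _ v
    have hfg : ∀ (i : Fin p) (v : V), fg (ψ (i : ℕ) v) = ψ (i : ℕ) (g v) := by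
      intro i v
      have h1 : e.symm (ψ (i : ℕ) v) =
          DirectSum.lof F (Fin p) (fun i => ↥(A i)) i ⟨ψ (i : ℕ) v, hmemA i v⟩ := by
        apply e.injective
        rw [e.apply_symm_apply, hedef]
        show ψ (i : ℕ) v = DirectSum.coeLinearMap A _
        rw [DirectSum.lof_eq_of, DirectSum.coeLinearMap_of]
      show DirectSum.toModule F (Fin p) W B (e.symm (ψ (i : ℕ) v)) = ψ (i : ℕ) (g v)
      rw [h1, DirectSum.toModule_lof]
      show ψ (i : ℕ) (g ((LinearEquiv.ofInjective (ψ (i : ℕ)) (hψinj (i : ℕ))).symm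
        ((LinearEquiv.ofEq _ _ (hrange i)) ⟨ψ (i : ℕ) v, hmemA i v⟩))) = ψ (i : ℕ) (g v)
      have h2 : (LinearEquiv.ofEq _ _ (hrange i)) (⟨ψ (i : ℕ) v, hmemA i v⟩ : A i) =
          ⟨ψ (i : ℕ) v, LinearMap.mem_range_self _ v⟩ :=
        Subtype.ext (LinearEquiv.coe_ofEq_apply _ _)
      rw [h2]
      have h3 : (LinearEquiv.ofInjective (ψ (i : ℕ)) (hψinj (i : ℕ))).symm
          ⟨ψ (i : ℕ) v, LinearMap.mem_range_self _ v⟩ = v := by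
        apply hψinj (i : ℕ)
        rw [LinearEquiv.ofInjective_symm_apply]
      rw [h3]
    have hfgH : ∀ (h : H) (w : W), τ ↑h (fg w) = fg (τ ↑h w) := by
      intro h
      have heq : (τ ↑h ∘ₗ fg) = (fg ∘ₗ τ ↑h) := by
        apply hgen
        intro i v
        show τ ↑h (fg (ψ (i : ℕ) v)) = fg (τ ↑h (ψ (i : ℕ) v))
        rw [hfg i v, hστ (i : ℕ) h (g v), hστ (i : ℕ) h v, hfg i, ← hgσ]
      intro w
      exact DFunLike.congr_fun heq w
    have hK : ∀ (k : ℕ) (v : V), fg (τ (a ^ k) (ι v)) = τ (a ^ k) (ι (g v)) := by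
      intro k v
      set hh : H := ⟨(a ^ p) ^ (k / p), pow_mem hap _⟩ with hhh
      have hsplit : a ^ k = ↑hh * a ^ (k % p) := by
        show a ^ k = (a ^ p) ^ (k / p) * a ^ (k % p)
        rw [← pow_mul, ← pow_add, Nat.div_add_mod]
      have harg : ∀ u : V, τ ↑hh (ψ (k % p) u) = τ (a ^ k) (ι u) := by
        intro u
        rw [hψapp, ← Module.End.mul_apply, ← map_mul, ← hsplit]
      have e1 : fg (τ (a ^ k) (ι v)) = fg (τ ↑hh (ψ (k % p) v)) :=
        congrArg fg (harg v).symm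
      have e2 : fg (τ ↑hh (ψ (k % p) v)) = τ ↑hh (fg (ψ (k % p) v)) := (hfgH hh _).symm
      have e3 : fg (ψ (k % p) v) = ψ (k % p) (g v) :=
        hfg ⟨k % p, Nat.mod_lt _ hp.pos⟩ v
      have e4 : τ ↑hh (ψ (k % p) (g v)) = τ (a ^ k) (ι (g v)) := harg (g v)
      rw [e1, e2, e3, e4]
    have hfga : ∀ w : W, τ a (fg w) = fg (τ a w) := by
      have heq : (τ a ∘ₗ fg) = (fg ∘ₗ τ a) := by
        apply hgen
        intro i v
        show τ a (fg (ψ (i : ℕ) v)) = fg (τ a (ψ (i : ℕ) v))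
        have h1 : τ a (ψ (i : ℕ) v) = τ (a ^ ((i : ℕ) + 1)) (ι v) := by
          rw [hψapp, ← Module.End.mul_apply, ← map_mul, ← pow_succ']
        rw [hfg, h1, hK]
        rw [hψapp, ← Module.End.mul_apply, ← map_mul, ← pow_succ']
      intro w
      exact DFunLike.congr_fun heq w
    set K' : Subgroup G :=
      { carrier := {b : G | ∀ w : W, τ b (fg w) = fg (τ b w)}
        one_mem' := by
          intro w
          simp
        mul_mem' := by
          rintro b c hb hc
          intro w
          rw [map_mul, Module.End.mul_apply, Module.End.mul_apply, hc w, hb (τ c w)]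
        inv_mem' := by
          intro b hb w
          calc τ b⁻¹ (fg w) = τ b⁻¹ (fg (τ b (τ b⁻¹ w))) := by rw [hτc2]
            _ = τ b⁻¹ (τ b (fg (τ b⁻¹ w))) := by rw [hb (τ b⁻¹ w)]
            _ = fg (τ b⁻¹ w) := hτc b _ } with hK'def
    have hHK' : H ≤ K' := by
      intro h hh
      intro w
      exact hfgH ⟨h, hh⟩ w
    have haK' : a ∈ K' := hfga
    have hK'top : K' = ⊤ := by
      rcases hbetween K' hHK' with h1 | h1
      · exact absurd (h1 ▸ haK') ha
      · exact h1
    have hfgmem : fg ∈ Subalgebra.centralizer F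
        (Set.range fun g' : G => (τ g' : Module.End F W)) := by
      rw [Subalgebra.mem_centralizer_iff]
      rintro x ⟨b, rfl⟩
      ext w
      have hb : b ∈ K' := hK'top ▸ Subgroup.mem_top b
      exact hb w
    refine ⟨fg, hfgmem, ?_⟩
    intro v
    have h5 := hK 0 v
    simpa using h5
  have hsurj2 : ∀ gg : ↥(Subalgebra.centralizer F
      (Set.range fun h : H => (σ h : Module.End F V))),
      ∃ f : ↥(Subalgebra.centralizer F (Set.range fun g : G => (τ g : Module.End F W))),
        (⟨Φ₀ f, hΦmem f⟩ : ↥(Subalgebra.centralizer F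
          (Set.range fun h : H => (σ h : Module.End F V)))) = gg := by
    rintro ⟨g, hg⟩
    have hgσ : ∀ (h : H) (v : V), σ h (g v) = g (σ h v) := by
      intro h v
      have h2 := (Subalgebra.mem_centralizer_iff F).mp hg (σ h) ⟨h, rfl⟩
      exact DFunLike.congr_fun h2 v
    obtain ⟨fg, hfgmem, hval⟩ := hsurj g hgσ
    refine ⟨⟨fg, hfgmem⟩, ?_⟩
    apply Subtype.ext
    apply LinearMap.ext
    intro v
    apply hinj
    rw [hE]
    exact hval v
  refine ⟨AlgEquiv.ofBijective
    { toFun := fun f => ⟨Φ₀ f, hΦmem f⟩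
      map_one' := ?_
      map_mul' := ?_
      map_zero' := ?_
      map_add' := ?_
      commutes' := ?_ } ⟨?_, ?_⟩⟩
  · apply Subtype.ext
    apply LinearMap.ext
    intro v
    apply hinj
    rw [hE]
    rfl
  · intro f f'
    apply Subtype.ext
    apply LinearMap.ext
    intro v
    apply hinj
    rw [hE]
    show (f : Module.End F W) ((f' : Module.End F W) (ι v)) = ι (Φ₀ f (Φ₀ f' v))
    rw [hE f, hE f']
  · apply Subtype.ext
    apply LinearMap.ext
    intro v
    apply hinj
    rw [hE]
    show (0 : W) = ι 0
    rw [map_zero]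
  · intro f f'
    apply Subtype.ext
    apply LinearMap.ext
    intro v
    apply hinj
    rw [hE]
    show (f : Module.End F W) (ι v) + (f' : Module.End F W) (ι v) = ι (Φ₀ f v + Φ₀ f' v)
    rw [map_add, hE, hE]
  · intro r
    apply Subtype.ext
    apply LinearMap.ext
    intro v
    apply hinj
    rw [hE]
    show r • (ι v) = ι (r • v)
    rw [map_smul]
  · -- injectivity
    intro f f' hff'
    apply Subtype.ext
    have h0 : ∀ v : V, (f : Module.End F W) (ι v) = (f' : Module.End F W) (ι v) := by
      intro v
      rw [← hE f v, ← hE f' v]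
      exact congrArg ι (DFunLike.congr_fun (congrArg Subtype.val hff') v)
    apply hgen
    intro i v
    rw [hψapp, ← hfc f, ← hfc f', h0]
  · -- surjectivity
    exact hsurj2
end

section
/- Let G be a finite group, H a normal subgroup, a ∈ G, V an FH-module, and α ∈ Aut_F(V) satisfying σ(a h a⁻¹) = α σ(h) α⁻¹ for all h ∈ H, where σ is the representation afforded by V. Then for each i ∈ ℤ, the map v ↦ v α^{-i} a^i is an FH-module isomorphism from V onto the FH-submodule V a^i of the restriction of V↑G to H. -/
open LinearMap

/-- If `α ∈ Aut_F(V)` intertwines `σ` with its `a`-conjugate, then for each `i ∈ ℤ` the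
map `τ(a^i) ∘ ι ∘ α^{-i}` is an `FH`-module isomorphism from `V` onto the `FH`-submodule
`V a^i = τ(a^i)(ι(V))` of the restriction of the induced module `W = V↑G` to `H`. -/
theorem stmt1 {F : Type*} [Field F] {G : Type*} [Group G]
    {V W : Type*} [AddCommGroup V] [Module F V] [AddCommGroup W] [Module F W]
    (H : Subgroup G) (hN : H.Normal)
    (σ : Representation F H V) (τ : Representation F G W)
    (a : G) (α : V ≃ₗ[F] V)
    (hα : ∀ h : H, σ ⟨a * ↑h * a⁻¹, hN.conj_mem ↑h h.2 a⟩ ∘ₗ (α : V →ₗ[F] V) =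
      (α : V →ₗ[F] V) ∘ₗ σ h)
    (ι : V →ₗ[F] W) (hinj : Function.Injective ι)
    (hequiv : ∀ h : H, τ h ∘ₗ ι = ι ∘ₗ σ h) (i : ℤ) :
    Function.Injective (τ (a ^ i) ∘ₗ ι ∘ₗ ((α ^ (-i) : V ≃ₗ[F] V) : V →ₗ[F] V)) ∧
    (∀ h : H, τ h ∘ₗ (τ (a ^ i) ∘ₗ ι ∘ₗ ((α ^ (-i) : V ≃ₗ[F] V) : V →ₗ[F] V)) =
      (τ (a ^ i) ∘ₗ ι ∘ₗ ((α ^ (-i) : V ≃ₗ[F] V) : V →ₗ[F] V)) ∘ₗ σ h) ∧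
    LinearMap.range (τ (a ^ i) ∘ₗ ι ∘ₗ ((α ^ (-i) : V ≃ₗ[F] V) : V →ₗ[F] V)) =
      Submodule.map (τ (a ^ i)) (LinearMap.range ι) := by

  -- pointwise versions of the hypotheses
  have hA : ∀ (h : H) (v : V), σ ⟨a * ↑h * a⁻¹, hN.conj_mem ↑h h.2 a⟩ (α v) = α (σ h v) := by
    intro h v
    simpa using LinearMap.congr_fun (hα h) v
  have hmemB : ∀ h : H, a⁻¹ * ↑h * a ∈ H := by
    intro h; simpa using hN.conj_mem ↑h h.2 a⁻¹
  have hB : ∀ (h : H) (v : V), σ ⟨a⁻¹ * ↑h * a, hmemB h⟩ (α⁻¹ v) = α⁻¹ (σ h v) := by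
    intro h v
    have h1 := hA ⟨a⁻¹ * ↑h * a, hmemB h⟩ (α⁻¹ v)
    have h2 : (⟨a * (a⁻¹ * ↑h * a) * a⁻¹, hN.conj_mem _ (hmemB h) a⟩ : H) = h :=
      Subtype.ext (by group)
    have hinv1 : ∀ u : V, α (α⁻¹ u) = u := fun u => α.apply_symm_apply u
    rw [h2, hinv1] at h1
    apply α.injective
    rw [hinv1, ← h1]
  have hE : ∀ (h : H) (v : V), τ ↑h (ι v) = ι (σ h v) := by
    intro h v; simpa using LinearMap.congr_fun (hequiv h) v
  have hτm : ∀ (g g' : G) (w : W), τ (g * g') w = τ g (τ g' w) := by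
    intro g g' w; rw [map_mul]; rfl
  -- the key pointwise equivariance statement
  have key : ∀ (h : H) (v : V),
      τ ↑h (τ (a ^ i) (ι ((α ^ (-i) : V ≃ₗ[F] V) v))) =
        τ (a ^ i) (ι ((α ^ (-i) : V ≃ₗ[F] V) (σ h v))) := by
    induction i using Int.induction_on with
    | zero => intro h v; simpa using hE h v
    | succ n ih =>
      intro h v
      have ea : a ^ ((n : ℤ) + 1) = a * a ^ (n : ℤ) := by
        rw [add_comm, zpow_add, zpow_one]
      have eα : ∀ u : V, (α ^ (-((n : ℤ) + 1)) : V ≃ₗ[F] V) u =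
          (α ^ (-(n : ℤ)) : V ≃ₗ[F] V) (α⁻¹ u) := by
        intro u
        rw [show (-((n : ℤ) + 1)) = -(n : ℤ) + -1 by ring, zpow_add, zpow_neg_one]; rfl
      have hc : (↑h : G) * a = a * ↑(⟨a⁻¹ * ↑h * a, hmemB h⟩ : H) := by group
      calc τ ↑h (τ (a ^ ((n : ℤ) + 1)) (ι ((α ^ (-((n : ℤ) + 1)) : V ≃ₗ[F] V) v)))
          = τ (↑h * a) (τ (a ^ (n : ℤ)) (ι ((α ^ (-(n : ℤ)) : V ≃ₗ[F] V) (α⁻¹ v)))) := by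
            rw [ea, eα, hτm, hτm]
        _ = τ a (τ ↑(⟨a⁻¹ * ↑h * a, hmemB h⟩ : H)
              (τ (a ^ (n : ℤ)) (ι ((α ^ (-(n : ℤ)) : V ≃ₗ[F] V) (α⁻¹ v))))) := by
            rw [hc, hτm]
        _ = τ a (τ (a ^ (n : ℤ)) (ι ((α ^ (-(n : ℤ)) : V ≃ₗ[F] V)
              (σ (⟨a⁻¹ * ↑h * a, hmemB h⟩ : H) (α⁻¹ v))))) := by
            rw [ih]
        _ = τ (a ^ ((n : ℤ) + 1)) (ι ((α ^ (-((n : ℤ) + 1)) : V ≃ₗ[F] V) (σ h v))) := by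
            rw [hB h v, ea, eα, hτm]
    | pred n ih =>
      intro h v
      have ea : a ^ (-(n : ℤ) - 1) = a⁻¹ * a ^ (-(n : ℤ)) := by
        rw [sub_eq_add_neg, add_comm, zpow_add, zpow_neg_one]
      have eα : ∀ u : V, (α ^ (-(-(n : ℤ) - 1)) : V ≃ₗ[F] V) u =
          (α ^ ((n : ℤ)) : V ≃ₗ[F] V) (α u) := by
        intro u
        rw [show (-(-(n : ℤ) - 1)) = (n : ℤ) + 1 by ring, zpow_add, zpow_one]; rfl
      have eα' : ∀ u : V, (α ^ (-(-(n : ℤ))) : V ≃ₗ[F] V) u =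
          (α ^ ((n : ℤ)) : V ≃ₗ[F] V) u := by intro u; rw [neg_neg]
      have hc : (↑h : G) * a⁻¹ = a⁻¹ * ↑(⟨a * ↑h * a⁻¹, hN.conj_mem ↑h h.2 a⟩ : H) := by
        group
      calc τ ↑h (τ (a ^ (-(n : ℤ) - 1)) (ι ((α ^ (-(-(n : ℤ) - 1)) : V ≃ₗ[F] V) v)))
          = τ (↑h * a⁻¹) (τ (a ^ (-(n : ℤ))) (ι ((α ^ (-(-(n : ℤ))) : V ≃ₗ[F] V) (α v)))) := by
            rw [ea, eα, eα', hτm, hτm]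
        _ = τ a⁻¹ (τ ↑(⟨a * ↑h * a⁻¹, hN.conj_mem ↑h h.2 a⟩ : H)
              (τ (a ^ (-(n : ℤ))) (ι ((α ^ (-(-(n : ℤ))) : V ≃ₗ[F] V) (α v))))) := by
            rw [hc, hτm]
        _ = τ a⁻¹ (τ (a ^ (-(n : ℤ))) (ι ((α ^ (-(-(n : ℤ))) : V ≃ₗ[F] V)
              (σ (⟨a * ↑h * a⁻¹, hN.conj_mem ↑h h.2 a⟩ : H) (α v))))) := by
            rw [ih]
        _ = τ (a ^ (-(n : ℤ) - 1)) (ι ((α ^ (-(-(n : ℤ) - 1)) : V ≃ₗ[F] V) (σ h v))) := by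
            rw [hA h v, ea, eα, eα', hτm]
  refine ⟨?_, ?_, ?_⟩
  · -- injectivity
    have hτinj : Function.Injective (τ (a ^ i)) := by
      intro x y hxy
      have := congrArg (τ ((a ^ i)⁻¹)) hxy
      rwa [← hτm, ← hτm, inv_mul_cancel, map_one, Module.End.one_apply,
        Module.End.one_apply] at this
    exact hτinj.comp (hinj.comp (α ^ (-i) : V ≃ₗ[F] V).injective)
  · intro h
    ext v
    simpa using key h v
  · rw [LinearMap.range_comp, LinearMap.range_comp, LinearEquiv.range, Submodule.map_top]
end

section
/- Let [G:H] = p and α ∈ Aut_F(V) satisfy σ(a h a⁻¹) = α σ(h) α⁻¹ for all h ∈ H, where a ∈ G \ H. Define λ = α^{-p} σ(a^p). Then λ lies in Δ^× = End_{FH}(V)^×, α(λ) = λ, and for all δ ∈ Δ one has α^p(δ) = λ δ λ⁻¹. -/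
open LinearMap

/-- With `[G:H] = p` prime, `a ∈ G \ H` (so `a^p ∈ H`) and `α` intertwining `σ` with its
`a`-conjugate, the element `λ = α^{-p} σ(a^p)` lies in `Δ^× = End_{FH}(V)^×`, satisfies
`α(λ) = λ` (where `α(δ) = α⁻¹ δ α`), and `α^p(δ) = λ δ λ⁻¹` for all `δ ∈ Δ` (stated as
`α^p(δ) λ = λ δ`). -/
theorem stmt3 {F : Type*} [Field F] {G : Type*} [Group G]
    {V : Type*} [AddCommGroup V] [Module F V]
    (H : Subgroup G) (hN : H.Normal) (p : ℕ) (hp : p.Prime) (hidx : H.index = p)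
    (σ : Representation F H V) (a : G) (ha : a ∉ H) (hap : a ^ p ∈ H)
    (α : V ≃ₗ[F] V)
    (hα : ∀ h : H, σ ⟨a * ↑h * a⁻¹, hN.conj_mem ↑h h.2 a⟩ ∘ₗ (α : V →ₗ[F] V) =
      (α : V →ₗ[F] V) ∘ₗ σ h) :
    (((α.symm : V →ₗ[F] V) ^ p) ∘ₗ σ ⟨a ^ p, hap⟩ ∈
        {δ : Module.End F V | ∀ h : H, Commute δ (σ h)} ∧
      IsUnit (((α.symm : V →ₗ[F] V) ^ p) ∘ₗ σ ⟨a ^ p, hap⟩)) ∧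
    ((α.symm : V →ₗ[F] V) ∘ₗ (((α.symm : V →ₗ[F] V) ^ p) ∘ₗ σ ⟨a ^ p, hap⟩) ∘ₗ
        (α : V →ₗ[F] V) = ((α.symm : V →ₗ[F] V) ^ p) ∘ₗ σ ⟨a ^ p, hap⟩) ∧
    (∀ δ : Module.End F V, (∀ h : H, Commute δ (σ h)) →
      (((α.symm : V →ₗ[F] V) ^ p) ∘ₗ δ ∘ₗ ((α : V →ₗ[F] V) ^ p)) ∘ₗ
          (((α.symm : V →ₗ[F] V) ^ p) ∘ₗ σ ⟨a ^ p, hap⟩) =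
        (((α.symm : V →ₗ[F] V) ^ p) ∘ₗ σ ⟨a ^ p, hap⟩) ∘ₗ δ) := by
  set A : Module.End F V := (α : V →ₗ[F] V) with hA
  set B : Module.End F V := (α.symm : V →ₗ[F] V) with hB
  have hBA : B * A = 1 := by
    ext v; simp [hA, hB, Module.End.mul_apply]
  have hAB : A * B = 1 := by
    ext v; simp [hA, hB, Module.End.mul_apply]
  -- key intertwining relations in ring form
  have key : ∀ h : H, σ ⟨a * ↑h * a⁻¹, hN.conj_mem ↑h h.2 a⟩ * A = A * σ h := by
    intro h; simpa [Module.End.mul_eq_comp] using hα h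
  have keyB : ∀ (h k : H), (k : G) = a * ↑h * a⁻¹ → B * σ k = σ h * B := by
    intro h k hk
    have hk' : k = ⟨a * ↑h * a⁻¹, hN.conj_mem ↑h h.2 a⟩ := Subtype.ext hk
    set k' : H := ⟨a * ↑h * a⁻¹, hN.conj_mem ↑h h.2 a⟩ with hk''
    subst hk'
    have e := key h
    have step1 : B * (σ k' * A) * B = σ h * B := by
      rw [e, ← mul_assoc B A (σ h), hBA, one_mul]
    have step2 : B * (σ k' * A) * B = B * σ k' := by
      rw [← mul_assoc B (σ k') A, mul_assoc (B * σ k') A B, hAB, mul_one]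
    exact step2.symm.trans step1
  have aux : ∀ (n : ℕ) (h k : H), (k : G) = a ^ n * ↑h * (a ^ n)⁻¹ →
      B ^ n * σ k = σ h * B ^ n := by
    intro n
    induction n with
    | zero =>
      intro h k hk
      have : k = h := Subtype.ext (by simpa using hk)
      subst this; simp
    | succ n ih =>
      intro h k hk
      set m : H := ⟨a ^ n * ↑h * (a ^ n)⁻¹, hN.conj_mem ↑h h.2 (a ^ n)⟩ with hm
      have hkm : (k : G) = a * ↑m * a⁻¹ := by
        rw [hk, hm]; group
      have h1 : B * σ k = σ m * B := keyB m k hkm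
      have h2 : B ^ n * σ m = σ h * B ^ n := ih h m rfl
      calc B ^ (n + 1) * σ k = B ^ n * (B * σ k) := by rw [pow_succ, mul_assoc]
        _ = B ^ n * σ m * B := by rw [h1, ← mul_assoc]
        _ = σ h * B ^ n * B := by rw [h2]
        _ = σ h * B ^ (n + 1) := by rw [mul_assoc, ← pow_succ]
  simp only [← Module.End.mul_eq_comp]
  set lam : Module.End F V := B ^ p * σ ⟨a ^ p, hap⟩ with hlam
  have hApBp : A ^ p * B ^ p = 1 := by
    have hc : Commute A B := by rw [Commute, SemiconjBy, hAB, hBA]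
    rw [← hc.mul_pow, hAB, one_pow]
  refine ⟨⟨?_, ?_⟩, ?_, ?_⟩
  · -- lam commutes with every σ h
    intro h
    set m : H := ⟨a ^ p * ↑h * (a ^ p)⁻¹, hN.conj_mem ↑h h.2 (a ^ p)⟩ with hm
    have hmem : (⟨a ^ p, hap⟩ : H) * h = m * ⟨a ^ p, hap⟩ := by
      apply Subtype.ext; simp [hm]
    have h1 : σ ⟨a ^ p, hap⟩ * σ h = σ m * σ ⟨a ^ p, hap⟩ := by
      rw [← map_mul, ← map_mul, hmem]
    have h2 : B ^ p * σ m = σ h * B ^ p := aux p h m rfl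
    show lam * σ h = σ h * lam
    calc lam * σ h = B ^ p * (σ ⟨a ^ p, hap⟩ * σ h) := by rw [hlam, mul_assoc]
      _ = B ^ p * σ m * σ ⟨a ^ p, hap⟩ := by rw [h1, ← mul_assoc]
      _ = σ h * lam := by rw [h2, hlam, mul_assoc]
  · -- lam is a unit
    have hBu : IsUnit B := ⟨⟨B, A, hBA, hAB⟩, rfl⟩
    exact (hBu.pow p).mul ((Group.isUnit (⟨a ^ p, hap⟩ : H)).map σ)
  · -- α-invariance
    have h1 : σ ⟨a ^ p, hap⟩ * A = A * σ ⟨a ^ p, hap⟩ := by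
      have := key ⟨a ^ p, hap⟩
      have he : (⟨a * (a ^ p) * a⁻¹, hN.conj_mem _ hap a⟩ : H) = ⟨a ^ p, hap⟩ :=
        Subtype.ext (by group)
      rwa [he] at this
    show B * lam * A = lam
    rw [hlam, ← mul_assoc B (B ^ p) (σ ⟨a ^ p, hap⟩), ← pow_mul_comm',
      mul_assoc (B ^ p * B) (σ ⟨a ^ p, hap⟩) A, h1,
      ← mul_assoc (B ^ p * B) A (σ ⟨a ^ p, hap⟩), mul_assoc (B ^ p) B A, hBA, mul_one]
  · intro δ hδ
    have h1 : δ * σ ⟨a ^ p, hap⟩ = σ ⟨a ^ p, hap⟩ * δ := hδ ⟨a ^ p, hap⟩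
    show B ^ p * δ * A ^ p * lam = lam * δ
    calc B ^ p * δ * A ^ p * lam
        = B ^ p * δ * (A ^ p * B ^ p) * σ ⟨a ^ p, hap⟩ := by
          rw [hlam, ← mul_assoc, mul_assoc (B ^ p * δ) (A ^ p) (B ^ p)]
      _ = B ^ p * (δ * σ ⟨a ^ p, hap⟩) := by rw [hApBp, mul_one, mul_assoc]
      _ = lam * δ := by rw [h1, hlam, ← mul_assoc]
end

section
/- Let Δ be a division ring, α an automorphism of Δ, and λ ∈ Δ^× with α(λ) = λ. Suppose the restriction of α to the center Z(Δ) has order exactly p. Then the general cyclic algebra Γ = (Δ, α, λ) is a simple ring. -/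
/-- If `α` restricted to the center of `Δ` has order exactly `p` and `α(λ) = λ`, then the
general cyclic algebra `Γ = (Δ, α, λ)` (encoded abstractly: `x ⬝ ι δ = ι (α δ) ⬝ x`,
`x^p = ι λ`, and `1, x, …, x^{p−1}` a left `Δ`-basis of `Γ`) is a simple ring. -/
theorem stmt6 {Δ : Type*} [DivisionRing Δ] (α : Δ ≃+* Δ) (p : ℕ) (hp : 0 < p)
    (lam : Δ) (hlam : lam ≠ 0) (hfix : α lam = lam)
    (hper : ∀ z ∈ Subring.center Δ, (α ^ p) z = z)
    (hmin : ∀ k : ℕ, 0 < k → k < p → ∃ z ∈ Subring.center Δ, (α ^ k) z ≠ z)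
    (Γ : Type*) [Ring Γ] (ι : Δ →+* Γ) (x : Γ)
    (hrel : ∀ δ : Δ, x * ι δ = ι (α δ) * x) (hx : x ^ p = ι lam)
    (hbasis : ∀ γ : Γ, ∃! c : Fin p → Δ, γ = ∑ i : Fin p, ι (c i) * x ^ (i : ℕ)) :
    IsSimpleRing Γ := by
  classical
  have hmulapp : ∀ (f g : Δ ≃+* Δ) (z : Δ), (f * g) z = f (g z) := fun _ _ _ => rfl
  have honeapp : ∀ z : Δ, (1 : Δ ≃+* Δ) z = z := fun _ => rfl
  -- any ring automorphism preserves the center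
  have hcen : ∀ (e : Δ ≃+* Δ) (z : Δ), z ∈ Subring.center Δ → e z ∈ Subring.center Δ := by
    intro e z hz
    rw [Subring.mem_center_iff] at hz ⊢
    intro g
    calc g * e z = e (e.symm g * z) := by rw [map_mul, e.apply_symm_apply]
    _ = e (z * e.symm g) := by rw [hz]
    _ = e z * g := by rw [map_mul, e.apply_symm_apply]
  -- commutation relation for powers
  have hxpow : ∀ (k : ℕ) (δ : Δ), x ^ k * ι δ = ι ((α ^ k) δ) * x ^ k := by
    intro k
    induction k with
    | zero => intro δ; simp [honeapp]
    | succ k ih =>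
      intro δ
      rw [pow_succ, mul_assoc, hrel δ, ← mul_assoc, ih (α δ), mul_assoc, ← pow_succ,
        pow_succ α k, hmulapp]
  -- multiplying a "polynomial" by scalars
  have hmulL : ∀ (c : Fin p → Δ) (a : Δ),
      ι a * (∑ i : Fin p, ι (c i) * x ^ (i : ℕ)) = ∑ i : Fin p, ι (a * c i) * x ^ (i : ℕ) := by
    intro c a
    rw [Finset.mul_sum]
    refine Finset.sum_congr rfl fun i _ => ?_
    rw [map_mul, mul_assoc]
  have hmulLR : ∀ (c : Fin p → Δ) (δ μ : Δ),
      ι δ * (∑ i : Fin p, ι (c i) * x ^ (i : ℕ)) -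
        (∑ i : Fin p, ι (c i) * x ^ (i : ℕ)) * ι μ =
      ∑ i : Fin p, ι (δ * c i - c i * (α ^ (i : ℕ)) μ) * x ^ (i : ℕ) := by
    intro c δ μ
    rw [Finset.mul_sum, Finset.sum_mul, ← Finset.sum_sub_distrib]
    refine Finset.sum_congr rfl fun i _ => ?_
    simp only [map_sub, map_mul, sub_mul, mul_assoc]
    rw [hxpow]
  -- uniqueness of coefficients of 0
  have huniq : ∀ d : Fin p → Δ, (∑ i : Fin p, ι (d i) * x ^ (i : ℕ)) = 0 → d = 0 := by
    intro d hd
    obtain ⟨c, _, hu⟩ := hbasis 0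
    have h1 := hu d hd.symm
    have h2 := hu 0 (by simp)
    rw [h1, h2]
  -- Γ is nontrivial
  have hnt : (0 : Γ) ≠ 1 := by
    intro h01
    have h1 : (∑ i : Fin p, ι ((Pi.single (⟨0, hp⟩ : Fin p) (1 : Δ) : Fin p → Δ) i)
        * x ^ (i : ℕ)) = 0 := by
      rw [Finset.sum_eq_single (⟨0, hp⟩ : Fin p)]
      · simp [h01.symm]
      · intro i _ hi; simp [Pi.single_eq_of_ne hi]
      · simp
    have := congrFun (huniq _ h1) ⟨0, hp⟩
    simp at this
  -- powers of x are "units": if x^{i₀} ∈ I then 1 ∈ I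
  have hunit : ∀ (i₀ : Fin p) (I : TwoSidedIdeal Γ), (x ^ (i₀ : ℕ)) ∈ I → (1 : Γ) ∈ I := by
    intro i₀ I hI
    have h1 : ι lam⁻¹ * (x ^ (p - (i₀ : ℕ)) * x ^ (i₀ : ℕ)) = 1 := by
      rw [← pow_add, Nat.sub_add_cancel (le_of_lt i₀.2), hx, ← map_mul,
        inv_mul_cancel₀ hlam, map_one]
    rw [← h1]
    exact I.mul_mem_left _ _ (I.mul_mem_left _ _ hI)
  -- the key inductive claim
  have key : ∀ (I : TwoSidedIdeal Γ) (n : ℕ) (c : Fin p → Δ),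
      (Finset.univ.filter fun i => c i ≠ 0).card ≤ n →
      (∑ i : Fin p, ι (c i) * x ^ (i : ℕ)) ∈ I → c ≠ 0 → (1 : Γ) ∈ I := by
    intro I n
    induction n with
    | zero =>
      intro c hcard _ hc0
      exfalso
      apply hc0
      funext i
      simp only [Pi.zero_apply]
      by_contra h
      have hmem : i ∈ Finset.univ.filter fun i => c i ≠ 0 := by simp [h]
      have := Finset.card_pos.2 ⟨i, hmem⟩
      omega
    | succ n ih =>
      intro c hcard hmem hc0
      obtain ⟨i₀, hi₀⟩ : ∃ i, c i ≠ 0 := by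
        by_contra h
        push_neg at h
        exact hc0 (funext h)
      have hc'mem : (∑ i : Fin p, ι ((c i₀)⁻¹ * c i) * x ^ (i : ℕ)) ∈ I := by
        rw [← hmulL]
        exact I.mul_mem_left _ _ hmem
      have hc'i₀ : (c i₀)⁻¹ * c i₀ = 1 := inv_mul_cancel₀ hi₀
      by_cases hcase : ∃ δ : Δ, (fun i : Fin p =>
          δ * ((c i₀)⁻¹ * c i) - ((c i₀)⁻¹ * c i) *
            ((α ^ (i : ℕ)) ((α ^ (i₀ : ℕ)).symm δ))) ≠ 0
      · obtain ⟨δ, hd⟩ := hcase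
        have hdmem : (∑ i : Fin p, ι (δ * ((c i₀)⁻¹ * c i) - ((c i₀)⁻¹ * c i) *
            ((α ^ (i : ℕ)) ((α ^ (i₀ : ℕ)).symm δ))) * x ^ (i : ℕ)) ∈ I := by
          rw [← hmulLR]
          exact I.sub_mem (I.mul_mem_left _ _ hc'mem) (I.mul_mem_right _ _ hc'mem)
        have hdi₀ : δ * ((c i₀)⁻¹ * c i₀) - ((c i₀)⁻¹ * c i₀) *
            ((α ^ (i₀ : ℕ)) ((α ^ (i₀ : ℕ)).symm δ)) = 0 := by
          rw [hc'i₀, RingEquiv.apply_symm_apply, mul_one, one_mul, sub_self]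
        have hsub : (Finset.univ.filter fun i : Fin p =>
            (δ * ((c i₀)⁻¹ * c i) - ((c i₀)⁻¹ * c i) *
              ((α ^ (i : ℕ)) ((α ^ (i₀ : ℕ)).symm δ))) ≠ 0) ⊆
            (Finset.univ.filter fun i => c i ≠ 0).erase i₀ := by
          intro i hi
          simp only [Finset.mem_filter, Finset.mem_univ, true_and, ne_eq] at hi
          rw [Finset.mem_erase]
          constructor
          · rintro rfl; exact hi hdi₀
          · simp only [Finset.mem_filter, Finset.mem_univ, true_and, ne_eq]
            intro hci
            exact hi (by rw [hci, mul_zero, mul_zero, zero_mul, sub_zero])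
        have hmemfilter : i₀ ∈ Finset.univ.filter fun i => c i ≠ 0 := by simp [hi₀]
        have hcard' : (Finset.univ.filter fun i : Fin p =>
            (δ * ((c i₀)⁻¹ * c i) - ((c i₀)⁻¹ * c i) *
              ((α ^ (i : ℕ)) ((α ^ (i₀ : ℕ)).symm δ))) ≠ 0).card ≤ n := by
          have h1 := Finset.card_le_card hsub
          rw [Finset.card_erase_of_mem hmemfilter] at h1
          omega
        exact ih _ hcard' hdmem hd
      · push_neg at hcase
        have hrel2 : ∀ z ∈ Subring.center Δ, ∀ i : Fin p,
            ((α ^ (i₀ : ℕ)) z) * ((c i₀)⁻¹ * c i) =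
              ((c i₀)⁻¹ * c i) * (α ^ (i : ℕ)) z := by
          intro z hz i
          have := congrFun (hcase ((α ^ (i₀ : ℕ)) z)) i
          simp only [RingEquiv.symm_apply_apply, Pi.zero_apply] at this
          exact sub_eq_zero.1 this
        have hsingle : ∀ i : Fin p, i ≠ i₀ → (c i₀)⁻¹ * c i = 0 := by
          intro i hne
          by_contra hci
          have hzz : ∀ z ∈ Subring.center Δ, (α ^ (i₀ : ℕ)) z = (α ^ (i : ℕ)) z := by
            intro z hz
            have h1 := hrel2 z hz i
            have h2 : ((c i₀)⁻¹ * c i) * (α ^ (i : ℕ)) z =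
                (α ^ (i : ℕ)) z * ((c i₀)⁻¹ * c i) := by
              have hcz := hcen (α ^ (i : ℕ)) z hz
              rw [Subring.mem_center_iff] at hcz
              exact hcz _
            rw [h2] at h1
            have h3 : ((α ^ (i₀ : ℕ)) z - (α ^ (i : ℕ)) z) * ((c i₀)⁻¹ * c i) = 0 := by
              rw [sub_mul, h1, sub_self]
            rcases mul_eq_zero.1 h3 with h | h
            · exact sub_eq_zero.1 h
            · exact absurd h hci
          have hvne : (i : ℕ) ≠ (i₀ : ℕ) := fun h => hne (Fin.ext h)
          rcases lt_or_gt_of_ne hvne with h | h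
          · obtain ⟨z₀, hz₀, hz₀ne⟩ := hmin ((i₀ : ℕ) - (i : ℕ)) (by omega) (by omega)
            have hzc : (α ^ (i : ℕ)).symm z₀ ∈ Subring.center Δ :=
              hcen (α ^ (i : ℕ)).symm z₀ hz₀
            have e1 : (α ^ (i : ℕ)) ((α ^ (i : ℕ)).symm z₀) = z₀ :=
              (α ^ (i : ℕ)).apply_symm_apply z₀
            have e2 : (α ^ (i₀ : ℕ)) ((α ^ (i : ℕ)).symm z₀) =
                (α ^ ((i₀ : ℕ) - (i : ℕ))) z₀ := by
              have hn : (i₀ : ℕ) = ((i₀ : ℕ) - (i : ℕ)) + (i : ℕ) := by omega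
              conv_lhs => rw [hn]
              rw [pow_add, hmulapp, e1]
            have := hzz _ hzc
            rw [e1, e2] at this
            exact hz₀ne this
          · obtain ⟨z₀, hz₀, hz₀ne⟩ := hmin ((i : ℕ) - (i₀ : ℕ)) (by omega) (by omega)
            have hzc : (α ^ (i₀ : ℕ)).symm z₀ ∈ Subring.center Δ :=
              hcen (α ^ (i₀ : ℕ)).symm z₀ hz₀
            have e1 : (α ^ (i₀ : ℕ)) ((α ^ (i₀ : ℕ)).symm z₀) = z₀ :=
              (α ^ (i₀ : ℕ)).apply_symm_apply z₀
            have e2 : (α ^ (i : ℕ)) ((α ^ (i₀ : ℕ)).symm z₀) =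
                (α ^ ((i : ℕ) - (i₀ : ℕ))) z₀ := by
              have hn : (i : ℕ) = ((i : ℕ) - (i₀ : ℕ)) + (i₀ : ℕ) := by omega
              conv_lhs => rw [hn]
              rw [pow_add, hmulapp, e1]
            have := hzz _ hzc
            rw [e1, e2] at this
            exact hz₀ne this.symm
        have hsum : (∑ i : Fin p, ι ((c i₀)⁻¹ * c i) * x ^ (i : ℕ)) = x ^ (i₀ : ℕ) := by
          rw [Finset.sum_eq_single i₀]
          · rw [hc'i₀, map_one, one_mul]
          · intro i _ hi; rw [hsingle i hi, map_zero, zero_mul]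
          · simp
        exact hunit i₀ I (hsum ▸ hc'mem)
  haveI : Nontrivial Γ := ⟨0, 1, hnt⟩
  refine ⟨⟨fun I => ?_⟩⟩
  by_cases hI : I = ⊥
  · exact Or.inl hI
  · right
    obtain ⟨a, ha, ha0⟩ : ∃ a, a ∈ I ∧ a ≠ 0 := by
      by_contra h
      push_neg at h
      apply hI
      ext y
      rw [TwoSidedIdeal.mem_bot]
      exact ⟨fun hy => h y hy, fun hy => hy ▸ I.zero_mem⟩
    obtain ⟨c, hc, _⟩ := hbasis a
    have hcne : c ≠ 0 := by
      rintro rfl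
      apply ha0
      rw [hc]
      simp
    exact I.one_mem_iff.1 (key I _ c le_rfl (hc ▸ ha) hcne)
end

section
/- Let Δ be a division ring, α an automorphism of Δ, λ ∈ Δ^× with α(λ) = λ and α^p(δ) = λ δ λ⁻¹ for all δ, and suppose α restricted to Z = Z(Δ) has order p with fixed field Z₀. Then the centralizer of Δ in Γ = (Δ, α, λ) equals Z, and the center of Γ equals Z₀. -/
/-- If `α|Z(Δ)` has order `p`, with fixed field `Z₀`, then in the general cyclic algebra
`Γ = (Δ, α, λ)` the centralizer of `Δ` equals `Z(Δ)` and the center of `Γ` equals `Z₀`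
(both transported into `Γ` via `ι`). -/
theorem stmt7 {Δ : Type*} [DivisionRing Δ] (α : Δ ≃+* Δ) (p : ℕ) (hp : 0 < p)
    (lam : Δ) (hlam : lam ≠ 0) (hfix : α lam = lam)
    (hinner : ∀ δ : Δ, (α ^ p) δ = lam * δ * lam⁻¹)
    (hper : ∀ z ∈ Subring.center Δ, (α ^ p) z = z)
    (hmin : ∀ k : ℕ, 0 < k → k < p → ∃ z ∈ Subring.center Δ, (α ^ k) z ≠ z)
    (Γ : Type*) [Ring Γ] (ι : Δ →+* Γ) (x : Γ)
    (hrel : ∀ δ : Δ, x * ι δ = ι (α δ) * x) (hx : x ^ p = ι lam)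
    (hbasis : ∀ γ : Γ, ∃! c : Fin p → Δ, γ = ∑ i : Fin p, ι (c i) * x ^ (i : ℕ)) :
    ((Subring.centralizer (Set.range ι) : Set Γ) = ι '' (Subring.center Δ)) ∧
    ((Subring.center Γ : Set Γ) = ι '' {z | z ∈ Subring.center Δ ∧ α z = z}) := by
  -- x^n * ι δ = ι (α^n δ) * x^n
  have hxn : ∀ (n : ℕ) (δ : Δ), x ^ n * ι δ = ι ((α ^ n) δ) * x ^ n := by
    intro n
    induction n with
    | zero => intro δ; simp only [pow_zero, one_mul, mul_one]; rfl
    | succ n ih =>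
      intro δ
      calc x ^ (n+1) * ι δ = x ^ n * (x * ι δ) := by rw [pow_succ, mul_assoc]
        _ = x ^ n * ι (α δ) * x := by rw [hrel, ← mul_assoc]
        _ = ι ((α ^ n) (α δ)) * x ^ (n+1) := by rw [ih, pow_succ, mul_assoc]
        _ = ι ((α ^ (n+1)) δ) * x ^ (n+1) := by rw [pow_succ]; rfl
  -- uniqueness of coefficients
  have huniq : ∀ a b : Fin p → Δ,
      (∑ i : Fin p, ι (a i) * x ^ (i : ℕ)) = (∑ i : Fin p, ι (b i) * x ^ (i : ℕ)) → a = b := by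
    intro a b hab
    obtain ⟨c, _, hu⟩ := hbasis (∑ i : Fin p, ι (a i) * x ^ (i : ℕ))
    exact (hu a rfl).trans (hu b hab).symm
  -- nontriviality
  have hnt : Nontrivial Γ := by
    by_contra h
    rw [not_nontrivial_iff_subsingleton] at h
    have h2 := congrFun (huniq 0 (fun _ => 1) (Subsingleton.elim _ _)) ⟨0, hp⟩
    simp at h2
  have hinj : Function.Injective ι := ι.injective
  -- cancel x on the right
  have hcancel : ∀ d : Δ, ι d * x = 0 → d = 0 := by
    intro d hd
    obtain ⟨q, hq⟩ : ∃ q, p = q + 1 := ⟨p - 1, (Nat.succ_pred_eq_of_pos hp).symm⟩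
    have h1 : ι d * x ^ p = 0 := by
      rw [hq, pow_succ', ← mul_assoc, hd, zero_mul]
    rw [hx, ← map_mul] at h1
    have h2 : d * lam = 0 := hinj (h1.trans (map_zero ι).symm)
    exact (mul_eq_zero.mp h2).resolve_right hlam
  -- fixed points stay fixed under powers
  have hfixpow : ∀ (n : ℕ) (z : Δ), α z = z → (α ^ n) z = z := by
    intro n z hz
    induction n with
    | zero => rfl
    | succ n ih =>
      have : (α ^ (n+1)) z = (α ^ n) (α z) := by rw [pow_succ]; rfl
      rw [this, hz, ih]
  -- key analysis of centralizer elements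
  have hcent : ∀ γ : Γ, (∀ δ : Δ, ι δ * γ = γ * ι δ) → ∃ z ∈ Subring.center Δ, γ = ι z := by
    intro γ hγ
    obtain ⟨c, hc, -⟩ := hbasis γ
    have hrelc : ∀ (δ : Δ) (i : Fin p), δ * c i = c i * (α ^ (i : ℕ)) δ := by
      intro δ i
      have e1 : (∑ j : Fin p, ι (δ * c j) * x ^ (j : ℕ))
          = ∑ j : Fin p, ι (c j * (α ^ (j : ℕ)) δ) * x ^ (j : ℕ) := by
        calc (∑ j : Fin p, ι (δ * c j) * x ^ (j : ℕ)) = ι δ * γ := by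
              rw [hc, Finset.mul_sum]
              exact Finset.sum_congr rfl fun j _ => by rw [map_mul, mul_assoc]
          _ = γ * ι δ := hγ δ
          _ = ∑ j : Fin p, ι (c j * (α ^ (j : ℕ)) δ) * x ^ (j : ℕ) := by
              rw [hc, Finset.sum_mul]
              exact Finset.sum_congr rfl fun j _ => by
                rw [mul_assoc, hxn, map_mul, ← mul_assoc]
      exact congrFun (huniq _ _ e1) i
    have hzero : ∀ i : Fin p, (i : ℕ) ≠ 0 → c i = 0 := by
      intro i hi
      obtain ⟨z, hz, hzne⟩ := hmin i (Nat.pos_of_ne_zero hi) i.isLt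
      have h2 := hrelc z i
      have h3 : c i * z = c i * (α ^ (i : ℕ)) z := by
        rw [← h2]; exact Subring.mem_center_iff.mp hz (c i)
      have h4 : c i * (z - (α ^ (i : ℕ)) z) = 0 := by rw [mul_sub, h3, sub_self]
      exact (mul_eq_zero.mp h4).resolve_right (sub_ne_zero.mpr fun h => hzne h.symm)
    refine ⟨c ⟨0, hp⟩, Subring.mem_center_iff.mpr fun g => ?_, ?_⟩
    · have h := hrelc g ⟨0, hp⟩
      simpa using h
    · rw [hc, Finset.sum_eq_single (⟨0, hp⟩ : Fin p)]
      · simp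
      · intro b _ hb
        have hb0 : (b : ℕ) ≠ 0 := fun h => hb (Fin.ext h)
        rw [hzero b hb0, map_zero, zero_mul]
      · intro h; exact absurd (Finset.mem_univ _) h
  -- ι of a fixed central element is central
  have hcenter_rev : ∀ z : Δ, z ∈ Subring.center Δ → α z = z → ∀ γ : Γ, γ * ι z = ι z * γ := by
    intro z hz hzfix γ
    obtain ⟨c, hc, -⟩ := hbasis γ
    rw [hc, Finset.sum_mul, Finset.mul_sum]
    refine Finset.sum_congr rfl fun j _ => ?_
    calc ι (c j) * x ^ (j : ℕ) * ι z = ι (c j * z) * x ^ (j : ℕ) := by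
          rw [mul_assoc, hxn, hfixpow _ _ hzfix, ← mul_assoc, ← map_mul]
      _ = ι z * (ι (c j) * x ^ (j : ℕ)) := by
          rw [Subring.mem_center_iff.mp hz (c j), map_mul, mul_assoc]
  constructor
  · ext γ
    simp only [SetLike.mem_coe, Set.mem_image, SetLike.mem_coe]
    constructor
    · intro hγ
      obtain ⟨z, hz, hzeq⟩ := hcent γ (fun δ => hγ (ι δ) ⟨δ, rfl⟩)
      exact ⟨z, hz, hzeq.symm⟩
    · rintro ⟨z, hz, rfl⟩
      intro m hm
      obtain ⟨δ, rfl⟩ := hm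
      rw [← map_mul, ← map_mul, Subring.mem_center_iff.mp hz δ]
  · ext γ
    simp only [SetLike.mem_coe, Set.mem_image, Set.mem_setOf_eq]
    constructor
    · intro hγ
      have hγ' := Subring.mem_center_iff.mp hγ
      obtain ⟨z, hz, rfl⟩ := hcent γ (fun δ => hγ' (ι δ))
      refine ⟨z, ⟨hz, ?_⟩, rfl⟩
      have h1 : x * ι z = ι z * x := hγ' x
      rw [hrel] at h1
      have h2 : ι (α z - z) * x = 0 := by rw [map_sub, sub_mul, h1, sub_self]
      exact sub_eq_zero.mp (hcancel _ h2)
    · rintro ⟨z, ⟨hz, hzfix⟩, rfl⟩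
      exact Subring.mem_center_iff.mpr (hcenter_rev z hz hzfix)
end

section
/- Let Δ be a division ring, α an automorphism of Δ, λ ∈ Δ^× with α(λ) = λ, α^p inner via λ, and α|Z(Δ) of order p with fixed field Z₀. If dim_{Z(Δ)} Δ = d², then dim_{Z₀} (Δ, α, λ) = (pd)². -/
set_option maxHeartbeats 1000000 in
/-- If `α|Z(Δ)` has order `p` (so `[Z(Δ) : Z₀] = p` where `Z₀` is the fixed field,
which coincides with the center of `Γ`), and `dim_{Z(Δ)} Δ = d²`, then the general
cyclic algebra `Γ = (Δ, α, λ)` satisfies `dim_{Z₀} Γ = (pd)²`; here `Z₀` is realized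
as the center of `Γ`. -/
theorem stmt8 {Δ : Type*} [DivisionRing Δ] (α : Δ ≃+* Δ) (p : ℕ) (hp : 0 < p)
    (lam : Δ) (hlam : lam ≠ 0) (hfix : α lam = lam)
    (hinner : ∀ δ : Δ, (α ^ p) δ = lam * δ * lam⁻¹)
    (hper : ∀ z ∈ Subring.center Δ, (α ^ p) z = z)
    (hmin : ∀ k : ℕ, 0 < k → k < p → ∃ z ∈ Subring.center Δ, (α ^ k) z ≠ z)
    (Γ : Type*) [Ring Γ] (ι : Δ →+* Γ) (x : Γ)
    (hrel : ∀ δ : Δ, x * ι δ = ι (α δ) * x) (hx : x ^ p = ι lam)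
    (hbasis : ∀ γ : Γ, ∃! c : Fin p → Δ, γ = ∑ i : Fin p, ι (c i) * x ^ (i : ℕ))
    (d : ℕ) (hd : Module.finrank (Subring.center Δ) Δ = d ^ 2) :
    Module.finrank (Subring.center Γ) Γ = (p * d) ^ 2 := by
  classical
  haveI : NeZero p := ⟨hp.ne'⟩
  -- Γ is nontrivial
  haveI hΓnt : Nontrivial Γ := by
    by_contra h
    rw [not_nontrivial_iff_subsingleton] at h
    have h01 : (fun _ => (0:Δ)) = (fun _ : Fin p => (1:Δ)) :=
      (hbasis 0).unique (Subsingleton.elim _ _) (Subsingleton.elim _ _)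
    exact one_ne_zero (congr_fun h01 ⟨0, hp⟩).symm
  -- commutation of powers of x with ι
  have hxcomm : ∀ (i : ℕ) (δ : Δ), x ^ i * ι δ = ι ((α ^ i) δ) * x ^ i := by
    intro i
    induction i with
    | zero => intro δ; simp
    | succ n ih =>
      intro δ
      have h1 : (α ^ (n+1)) δ = (α ^ n) (α δ) := by rw [pow_succ]; rfl
      rw [h1, pow_succ, mul_assoc, hrel, ← mul_assoc, ih, mul_assoc]
  -- uniqueness of coefficients
  have huniq : ∀ (b b' : Fin p → Δ),
      (∑ i : Fin p, ι (b i) * x ^ (i:ℕ)) = ∑ i : Fin p, ι (b' i) * x ^ (i:ℕ) → b = b' := by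
    intro b b' h
    exact (hbasis _).unique rfl h
  have hαfixpow : ∀ (z : Δ), α z = z → ∀ i : ℕ, (α ^ i) z = z := by
    intro z hz i
    induction i with
    | zero => rfl
    | succ n ih => rw [pow_succ]; show (α ^ n) (α z) = z; rw [hz, ih]
  -- characterization of the center of Γ
  have hcentral : ∀ γ : Γ, γ ∈ Subring.center Γ ↔
      ∃ z : Δ, z ∈ Subring.center Δ ∧ α z = z ∧ γ = ι z := by
    intro γ
    constructor
    · intro hγ
      rw [Subring.mem_center_iff] at hγ
      obtain ⟨cc, hcc, -⟩ := hbasis γ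
      have key : ∀ (δ : Δ) (i : Fin p), δ * cc i = cc i * (α ^ (i:ℕ)) δ := by
        intro δ i
        have h1 : ι δ * γ = ∑ j : Fin p, ι (δ * cc j) * x ^ (j:ℕ) := by
          rw [hcc, Finset.mul_sum]
          refine Finset.sum_congr rfl fun j _ => by rw [map_mul, mul_assoc]
        have h2 : ι δ * γ = ∑ j : Fin p, ι (cc j * (α ^ (j:ℕ)) δ) * x ^ (j:ℕ) := by
          rw [hγ (ι δ), hcc, Finset.sum_mul]
          refine Finset.sum_congr rfl fun j _ => by
            rw [mul_assoc, hxcomm, ← mul_assoc, map_mul]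
        have := huniq _ _ (h1.symm.trans h2)
        exact congr_fun this i
      have hzero : ∀ i : Fin p, i ≠ 0 → cc i = 0 := by
        intro i hi
        by_contra hne
        obtain ⟨z, hz, hzne⟩ :=
          hmin i (Nat.pos_of_ne_zero (fun h => hi (Fin.ext (by simp [h])))) i.isLt
        apply hzne
        have h1 : cc i * (α ^ (i:ℕ)) z = cc i * z := by
          rw [← key z i, ← Subring.mem_center_iff.mp hz (cc i)]
        exact mul_left_cancel₀ hne h1
      have hγ0 : γ = ι (cc 0) := by
        rw [hcc, Finset.sum_eq_single 0]
        · simp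
        · intro j _ hj; rw [hzero j hj]; simp
        · intro h; exact absurd (Finset.mem_univ 0) h
      have h00 : ∀ g : Δ, (α ^ ((0 : Fin p) : ℕ)) g = g := by
        intro g; rw [Fin.val_zero, pow_zero]; rfl
      refine ⟨cc 0, Subring.mem_center_iff.mpr fun g => ?_, ?_, hγ0⟩
      · have := key g 0
        rwa [h00 g] at this
      · have hxγ : x * γ = γ * x := hγ x
        rw [hγ0, hrel] at hxγ
        have hsub : (ι (α (cc 0)) - ι (cc 0)) * x = 0 := by
          rw [sub_mul, hxγ, sub_self]
        have hp' : x ^ p = x * x ^ (p - 1) := by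
          rw [← pow_succ']
          congr 1
          omega
        have h0 : ι ((α (cc 0) - cc 0) * lam) = 0 := by
          rw [map_mul, ← hx, hp', map_sub, ← mul_assoc, hsub, zero_mul]
        have h2 : (α (cc 0) - cc 0) * lam = 0 := by
          apply ι.injective
          rw [h0, map_zero]
        exact sub_eq_zero.mp ((mul_eq_zero.mp h2).resolve_right hlam)
    · rintro ⟨z, hzc, hzf, rfl⟩
      rw [Subring.mem_center_iff]
      intro g
      obtain ⟨cg, hcg, -⟩ := hbasis g
      rw [hcg, Finset.sum_mul, Finset.mul_sum]
      refine Finset.sum_congr rfl fun j _ => ?_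
      rw [mul_assoc, hxcomm, hαfixpow z hzf, ← mul_assoc, ← map_mul, ← mul_assoc, ← map_mul,
        Subring.mem_center_iff.mp hzc (cg j)]
  -- α preserves the center of Δ
  have hαcen : ∀ z ∈ Subring.center Δ, α z ∈ Subring.center Δ := by
    intro z hz
    rw [Subring.mem_center_iff] at hz ⊢
    intro g
    calc g * α z = α (α.symm g * z) := by rw [map_mul, α.apply_symm_apply]
    _ = α (z * α.symm g) := by rw [hz (α.symm g)]
    _ = α z * g := by rw [map_mul, α.apply_symm_apply]
  have hαcen' : ∀ z ∈ Subring.center Δ, α.symm z ∈ Subring.center Δ := by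
    intro z hz
    rw [Subring.mem_center_iff] at hz ⊢
    intro g
    calc g * α.symm z = α.symm (α g * z) := by rw [map_mul, α.symm_apply_apply]
    _ = α.symm (z * α g) := by rw [hz (α g)]
    _ = α.symm z * g := by rw [map_mul, α.symm_apply_apply]
  -- the induced automorphism σ of the center of Δ, of order exactly p
  let σ : Subring.center Δ ≃+* Subring.center Δ :=
    { toFun := fun z => ⟨α z, hαcen z z.2⟩
      invFun := fun z => ⟨α.symm z, hαcen' z z.2⟩
      left_inv := fun z => Subtype.ext (α.symm_apply_apply z)
      right_inv := fun z => Subtype.ext (α.apply_symm_apply z)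
      map_add' := fun a b => Subtype.ext (map_add α a.1 b.1)
      map_mul' := fun a b => Subtype.ext (map_mul α a.1 b.1) }
  have hσpow : ∀ (n : ℕ) (z : Subring.center Δ), ((σ ^ n) z : Δ) = (α ^ n) (z : Δ) := by
    intro n
    induction n with
    | zero => intro z; rfl
    | succ m ih =>
      intro z
      rw [pow_succ, pow_succ]
      show ((σ ^ m) (σ z) : Δ) = (α ^ m) (α (z : Δ))
      rw [ih (σ z)]
      rfl
  have hσp : σ ^ p = 1 := by
    ext z
    exact congrArg Subtype.val (Subtype.ext ((hσpow p z).trans (hper z z.2)))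
  have hσk : ∀ k, 0 < k → k < p → σ ^ k ≠ 1 := by
    intro k h1 h2 heq
    obtain ⟨z, hz, hzne⟩ := hmin k h1 h2
    apply hzne
    have := congrArg
      (fun f : Subring.center Δ ≃+* Subring.center Δ => ((f ⟨z, hz⟩ : Subring.center Δ) : Δ)) heq
    exact (hσpow k ⟨z, hz⟩).symm.trans this
  have horder : orderOf σ = p := by
    rw [orderOf_eq_iff hp]
    exact ⟨hσp, fun m hm1 hm2 => hσk m hm2 hm1⟩
  have hfin : IsOfFinOrder σ := isOfFinOrder_iff_pow_eq_one.mpr ⟨p, hp, hσp⟩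
  haveI : Finite (Subgroup.zpowers σ) := hfin.finite_zpowers
  letI : Fintype (Subgroup.zpowers σ) := Fintype.ofFinite _
  have hcardG : Fintype.card (Subgroup.zpowers σ) = p := by
    rw [← Nat.card_eq_fintype_card, Nat.card_zpowers, horder]
  haveI : FaithfulSMul (Subgroup.zpowers σ) (Subring.center Δ) := by
    constructor
    intro g1 g2 h
    exact Subtype.ext (RingEquiv.ext fun z => h z)
  -- the fixed field Z₀
  set Z₀ := FixedPoints.subfield (Subgroup.zpowers σ) (Subring.center Δ) with hZ₀def
  have hfinrankK : Module.finrank Z₀ (Subring.center Δ) = p := by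
    rw [hZ₀def, FixedPoints.finrank_eq_card, hcardG]
  have hZ₀mem : ∀ z : Subring.center Δ, z ∈ Z₀ ↔ α (z : Δ) = (z : Δ) := by
    intro z
    constructor
    · intro hz
      have := hz ⟨σ, Subgroup.mem_zpowers σ⟩
      exact congrArg Subtype.val this
    · intro hz
      have hσz : σ z = z := Subtype.ext hz
      have hn : ∀ n : ℕ, (σ ^ n) z = z := by
        intro n
        induction n with
        | zero => rfl
        | succ m ih => rw [pow_succ]; show (σ ^ m) (σ z) = z; rw [hσz, ih]
      intro g
      obtain ⟨g, hg⟩ := g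
      obtain ⟨n, rfl⟩ := Subgroup.mem_zpowers_iff.mp hg
      show (σ ^ n) • z = z
      cases n with
      | ofNat m =>
        rw [Int.ofNat_eq_coe, zpow_natCast]
        exact hn m
      | negSucc m =>
        rw [zpow_negSucc]
        show (σ ^ (m + 1)).symm z = z
        exact (σ ^ (m + 1)).symm_apply_eq.mpr (hn (m + 1)).symm
  -- module structures over Z₀ and the final dimension count
  letI : Module Z₀ Δ := Module.compHom Δ ((Subring.center Δ).subtype.comp Z₀.subtype)
  letI : IsScalarTower Z₀ (Subring.center Δ) Δ :=
    ⟨fun z k δ => mul_assoc ((z : Subring.center Δ) : Δ) (k : Δ) δ⟩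
  have h1 : Module.finrank Z₀ Δ = p * d ^ 2 := by
    rw [← @Module.finrank_mul_finrank Z₀ (Subring.center Δ) Δ _ _ _ _ _ _ (by assumption), hfinrankK, hd]
  letI : Module Z₀ Γ := Module.compHom Γ (ι.comp ((Subring.center Δ).subtype.comp Z₀.subtype))
  let S : (Fin p → Δ) →ₗ[Z₀] Γ :=
    { toFun := fun c => ∑ i : Fin p, ι (c i) * x ^ (i:ℕ)
      map_add' := fun a b => by
        simp only [Pi.add_apply, map_add, add_mul]
        rw [Finset.sum_add_distrib]
      map_smul' := fun z c => by
        show ∑ i : Fin p, ι ((((z : Subring.center Δ) : Δ)) * c i) * x ^ (i:ℕ) =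
          ι ((z : Subring.center Δ) : Δ) * ∑ i : Fin p, ι (c i) * x ^ (i:ℕ)
        rw [Finset.mul_sum]
        exact Finset.sum_congr rfl fun i _ => by rw [map_mul, mul_assoc] }
  have hSbij : Function.Bijective S :=
    ⟨fun a b h => huniq a b h,
     fun γ => ⟨(hbasis γ).choose, ((hbasis γ).choose_spec.1).symm⟩⟩
  have h2 : Module.finrank Z₀ Γ = Module.finrank Z₀ (Fin p → Δ) :=
    (LinearEquiv.ofBijective S hSbij).finrank_eq.symm
  have h3 : Module.finrank Z₀ (Fin p → Δ) = p * Module.finrank Z₀ Δ := by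
    by_cases hfd : FiniteDimensional Z₀ Δ
    · erw [Module.finrank_pi_fintype Z₀ (M := fun _ : Fin p => Δ)]
      simp [Finset.sum_const, Finset.card_univ]
    · have hnd : ¬ FiniteDimensional Z₀ (Fin p → Δ) := fun h =>
        hfd (Module.Finite.of_surjective (LinearMap.proj (⟨0, hp⟩ : Fin p))
          (fun δ => ⟨fun _ => δ, rfl⟩))
      rw [Module.finrank_of_infinite_dimensional hfd,
        Module.finrank_of_infinite_dimensional hnd, mul_zero]
  have hch : ∀ γc : Subring.center Γ, ∃ z : Δ, z ∈ Subring.center Δ ∧ α z = z ∧ (γc : Γ) = ι z :=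
    fun γc => (hcentral γc).mp γc.2
  let i : Subring.center Γ → Z₀ := fun γc =>
    ⟨⟨(hch γc).choose, (hch γc).choose_spec.1⟩, (hZ₀mem _).mpr (hch γc).choose_spec.2.1⟩
  have hi : ∀ γc : Subring.center Γ, (γc : Γ) = ι (((i γc : Subring.center Δ)) : Δ) :=
    fun γc => (hch γc).choose_spec.2.2
  have hi0 : i 0 = 0 := by
    apply Subtype.ext; apply Subtype.ext
    refine ι.injective ?_
    rw [← hi 0]
    simp
  have hibij : Function.Bijective i := by
    constructor
    · intro a b hab
      apply Subtype.ext
      rw [hi a, hi b, hab]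
    · intro w
      have hw : ι ((w : Subring.center Δ) : Δ) ∈ Subring.center Γ :=
        (hcentral _).mpr ⟨_, (w : Subring.center Δ).2, (hZ₀mem _).mp w.2, rfl⟩
      refine ⟨⟨_, hw⟩, ?_⟩
      apply Subtype.ext; apply Subtype.ext
      exact ι.injective (hi ⟨_, hw⟩).symm
  have hrank : Module.rank (Subring.center Γ) Γ = Module.rank Z₀ Γ := by
    refine rank_eq_of_equiv_equiv (ZeroHom.mk i hi0) (AddEquiv.refl Γ) hibij ?_
    intro r m
    show (r : Γ) * m = ι (((i r : Subring.center Δ)) : Δ) * m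
    rw [← hi r]
  have h4 : Module.finrank (Subring.center Γ) Γ = Module.finrank Z₀ Γ := by
    simp only [Module.finrank, hrank]
  rw [h4, h2, h3, h1]; ring
end

section
/- Let Δ be a division algebra with center F, and let μ(s) ∈ F[s] be irreducible of prime degree. If μ has no root in Δ, then the quotient ring Δ[s]/μ(s)Δ[s] is a division algebra. -/
open Polynomial

section Aux

variable {F : Type*} [Field F] {Δ : Type*} [DivisionRing Δ]

theorem aux_div {Δ : Type*} [DivisionRing Δ] (b : Polynomial Δ) (hb : b.Monic) :
    ∀ a : Polynomial Δ, ∃ q r, a = q * b + r ∧ r.degree < b.degree := by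
  have hb0 : b ≠ 0 := hb.ne_zero
  have H : ∀ (n : ℕ) (a : Polynomial Δ), a.degree < n →
      ∃ q r, a = q * b + r ∧ r.degree < b.degree := by
    intro n
    induction n with
    | zero =>
      intro a ha
      have ha0 : a = 0 := by
        rw [← Polynomial.degree_eq_bot]
        exact Nat.WithBot.lt_zero_iff.mp ha
      exact ⟨0, 0, by simp [ha0], by simpa [bot_lt_iff_ne_bot, degree_eq_bot] using hb0⟩
    | succ n ih =>
      intro a ha
      by_cases hlt : a.degree < b.degree
      · exact ⟨0, a, by rw [zero_mul, zero_add], hlt⟩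
      · push_neg at hlt
        have ha0 : a ≠ 0 := by
          intro h
          rw [h, degree_zero, le_bot_iff, degree_eq_bot] at hlt
          exact hb0 hlt
        have hnd : b.natDegree ≤ a.natDegree := natDegree_le_natDegree hlt
        set z : Polynomial Δ := C a.leadingCoeff * X ^ (a.natDegree - b.natDegree) with hz
        have hlcz : z.leadingCoeff = a.leadingCoeff := by
          rw [hz, leadingCoeff_C_mul_X_pow]
        have hzne : z ≠ 0 := by
          intro h
          rw [h, leadingCoeff_zero] at hlcz
          exact ha0 (leadingCoeff_eq_zero.mp hlcz.symm)
        have hdz : z.degree = ↑(a.natDegree - b.natDegree) := by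
          rw [hz, degree_C_mul_X_pow _ (leadingCoeff_ne_zero.mpr ha0)]
        have hzb : (z * b).degree = a.degree := by
          rw [degree_mul, hdz, degree_eq_natDegree hb0, degree_eq_natDegree ha0,
            ← Nat.cast_add, tsub_add_cancel_of_le hnd]
        have hlc : (z * b).leadingCoeff = a.leadingCoeff := by
          rw [leadingCoeff_mul, hlcz, hb.leadingCoeff, mul_one]
        have hsub : (a - z * b).degree < a.degree := degree_sub_lt hzb.symm ha0 hlc.symm
        obtain ⟨q, r, h1, h2⟩ := ih (a - z * b)
          (lt_of_lt_of_le hsub (Order.le_of_lt_succ (by exact_mod_cast ha)))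
        refine ⟨z + q, r, ?_, h2⟩
        rw [add_mul, add_assoc, ← h1, add_sub_cancel]
  intro a
  exact H (a.natDegree + 1) a
    (lt_of_le_of_lt degree_le_natDegree (by exact_mod_cast Nat.lt_succ_self _))

/-- every nonzero left ideal of `Δ[X]` has a monic generator of minimal degree. -/
theorem aux_min (J : Submodule (Polynomial Δ) (Polynomial Δ))
    (hJ : ∃ x ∈ J, x ≠ (0 : Polynomial Δ)) :
    ∃ w ∈ J, w.Monic ∧ (∀ x ∈ J, ∃ y, x = y * w) ∧
      (∀ x ∈ J, x ≠ 0 → w.natDegree ≤ x.natDegree) := by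
  classical
  set dset : Set ℕ := {n | ∃ x ∈ J, x ≠ (0 : Polynomial Δ) ∧ x.natDegree = n} with hdset
  obtain ⟨x₀', hx₀'J, hx₀'0⟩ := hJ
  have hne : dset.Nonempty := ⟨x₀'.natDegree, x₀', hx₀'J, hx₀'0, rfl⟩
  obtain ⟨x₀, hx₀J, hx₀0, hx₀d⟩ := Nat.sInf_mem hne
  have hmin : ∀ x ∈ J, x ≠ (0 : Polynomial Δ) → x₀.natDegree ≤ x.natDegree := by
    intro x hxJ hx0
    rw [hx₀d]
    exact Nat.sInf_le ⟨x, hxJ, hx0, rfl⟩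
  set w : Polynomial Δ := C x₀.leadingCoeff⁻¹ * x₀ with hw
  have hwJ : w ∈ J := by
    have := J.smul_mem (C x₀.leadingCoeff⁻¹) hx₀J
    rwa [smul_eq_mul] at this
  have hlc0 : x₀.leadingCoeff ≠ 0 := leadingCoeff_ne_zero.mpr hx₀0
  have hwm : w.Monic := by
    rw [Monic, hw, leadingCoeff_mul, leadingCoeff_C, inv_mul_cancel₀ hlc0]
  have hwd : w.natDegree = x₀.natDegree := by
    rw [hw, natDegree_mul (by simpa using inv_ne_zero hlc0) hx₀0, natDegree_C, zero_add]
  refine ⟨w, hwJ, hwm, ?_, fun x hx h0 => hwd ▸ hmin x hx h0⟩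
  intro x hxJ
  obtain ⟨q, r, hqr, hdr⟩ := aux_div w hwm x
  have hrJ : r ∈ J := by
    have : r = x - q * w := by rw [hqr]; abel
    rw [this]
    exact J.sub_mem hxJ (by simpa [smul_eq_mul] using J.smul_mem q hwJ)
  have hr0 : r = 0 := by
    by_contra hr0
    have := hmin r hrJ hr0
    rw [← hwd] at this
    exact absurd (natDegree_lt_natDegree hr0 hdr) (not_lt.mpr this)
  exact ⟨q, by rw [hqr, hr0, add_zero]⟩

/-- mapped `F`-polynomials are central in `Δ[X]`. -/
theorem aux_central [Algebra F Δ]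
    (hcent : ∀ z : Δ, z ∈ Subring.center Δ ↔ ∃ c : F, z = algebraMap F Δ c)
    (σ : Polynomial F) (x : Polynomial Δ) :
    σ.map (algebraMap F Δ) * x = x * σ.map (algebraMap F Δ) := by
  have hc : ∀ (i : ℕ) (d : Δ), (σ.map (algebraMap F Δ)).coeff i * d
      = d * (σ.map (algebraMap F Δ)).coeff i := by
    intro i d
    rw [coeff_map]
    have : algebraMap F Δ (σ.coeff i) ∈ Subring.center Δ := (hcent _).mpr ⟨σ.coeff i, rfl⟩
    exact ((Subring.mem_center_iff.mp this) d).symm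
  set m := σ.map (algebraMap F Δ) with hm
  have key : ∀ d : Δ, Commute m (C d) := by
    intro d
    apply Polynomial.ext
    intro i
    rw [coeff_mul_C, coeff_C_mul, hc]
  have : Commute m x := by
    induction x using Polynomial.induction_on' with
    | add p q hp hq => exact hp.add_right hq
    | monomial n a =>
      rw [← C_mul_X_pow_eq_monomial]
      exact ((key a).mul_right (Commute.pow_right (commute_X m).symm n))
  exact this

theorem aux_classify [Algebra F Δ]
    (hcent : ∀ z : Δ, z ∈ Subring.center Δ ↔ ∃ c : F, z = algebraMap F Δ c)
    {μ₁ : Polynomial F} (hm : μ₁.Monic) (hirr : Irreducible μ₁)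
    (J : Submodule (Polynomial Δ) (Polynomial Δ))
    (hmem : μ₁.map (algebraMap F Δ) ∈ J)
    (hstab : ∀ x ∈ J, ∀ d : Δ, x * C d ∈ J) :
    (∀ x ∈ J, ∃ y, x = y * μ₁.map (algebraMap F Δ)) ∨ (1 : Polynomial Δ) ∈ J := by
  classical
  have hinj : Function.Injective (algebraMap F Δ) := (algebraMap F Δ).injective
  set m₁ : Polynomial Δ := μ₁.map (algebraMap F Δ) with hm₁def
  have hm₁monic : m₁.Monic := hm.map _
  obtain ⟨w, hwJ, hwm, hwdvd, hwmin⟩ := aux_min J ⟨m₁, hmem, hm₁monic.ne_zero⟩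
  -- w commutes with constants
  have hcomm : ∀ d : Δ, w * C d = C d * w := by
    intro d
    by_contra hne
    set y : Polynomial Δ := w * C d - C d * w with hy
    have hy0 : y ≠ 0 := sub_ne_zero.mpr hne
    have hyJ : y ∈ J := J.sub_mem (hstab w hwJ d)
      (by simpa [smul_eq_mul] using J.smul_mem (C d) hwJ)
    have hydeg : y.natDegree ≤ w.natDegree :=
      le_trans (natDegree_sub_le _ _) (by
        simp only [max_le_iff]
        constructor
        · exact le_trans natDegree_mul_le (by simp)
        · exact le_trans natDegree_mul_le (by simp))
    have hyc : y.coeff w.natDegree = 0 := by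
      rw [hy, coeff_sub, coeff_mul_C, coeff_C_mul, hwm.coeff_natDegree, one_mul, mul_one, sub_self]
    have : w.natDegree ≤ y.natDegree := hwmin y hyJ hy0
    have hyd : y.natDegree = w.natDegree := le_antisymm hydeg this
    exact hy0 (leadingCoeff_eq_zero.mp (by rw [leadingCoeff, hyd, hyc]))
  -- coefficients of w are central, so w comes from F[X]
  have hc : ∀ i : ℕ, ∃ ci : F, w.coeff i = algebraMap F Δ ci := by
    intro i
    refine (hcent _).mp (Subring.mem_center_iff.mpr fun g => ?_)
    have := congrArg (fun z => Polynomial.coeff z i) (hcomm g)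
    simpa [coeff_mul_C, coeff_C_mul] using this.symm
  choose c hcspec using hc
  set σ : Polynomial F := ∑ i ∈ Finset.range (w.natDegree + 1), C (c i) * X ^ i with hσ
  have hmap : σ.map (algebraMap F Δ) = w := by
    rw [hσ, Polynomial.map_sum]
    conv_rhs => rw [w.as_sum_range_C_mul_X_pow]
    refine Finset.sum_congr rfl fun i _ => ?_
    rw [Polynomial.map_mul, Polynomial.map_pow, map_C, map_X, hcspec]
  have hσm : σ.Monic := by
    rw [hinj.monic_map_iff, hmap]; exact hwm
  -- divide μ₁ by σ in F[X]
  have hdiv : μ₁ = μ₁ /ₘ σ * σ + μ₁ %ₘ σ := by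
    have h := modByMonic_add_div μ₁ σ
    rw [mul_comm, add_comm] at h
    exact h.symm
  obtain ⟨y, hyw⟩ := hwdvd m₁ hmem
  set u : Polynomial Δ := (μ₁ /ₘ σ).map (algebraMap F Δ) with hu
  set r : Polynomial Δ := (μ₁ %ₘ σ).map (algebraMap F Δ) with hr
  have hmapped : m₁ = u * w + r := by
    rw [hm₁def]
    conv_lhs => rw [hdiv]
    rw [Polynomial.map_add, Polynomial.map_mul, hmap, hu, hr]
  have heq : (y - u) * w = r := by
    rw [sub_mul, ← hyw, hmapped]; abel
  have hy0 : y - u = 0 := by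
    by_contra hy0
    have hdl : ((y - u) * w).degree < w.degree := by
      rw [heq, hr]
      calc ((μ₁ %ₘ σ).map (algebraMap F Δ)).degree ≤ (μ₁ %ₘ σ).degree := degree_map_le
        _ < σ.degree := degree_modByMonic_lt μ₁ hσm
        _ = w.degree := by rw [← hmap, degree_map_eq_of_injective hinj]
    have h1 : ((y - u) * w).natDegree < w.natDegree :=
      natDegree_lt_natDegree (mul_ne_zero hy0 hwm.ne_zero) hdl
    have h2 : ((y - u) * w).natDegree = (y - u).natDegree + w.natDegree :=
      natDegree_mul hy0 hwm.ne_zero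
    omega
  have hrz : μ₁ %ₘ σ = 0 := by
    have : r = 0 := by rw [← heq, hy0, zero_mul]
    rw [hr] at this
    exact (Polynomial.map_eq_zero_iff hinj).mp this
  have hdvd : μ₁ = σ * (μ₁ /ₘ σ) := by
    conv_lhs => rw [hdiv]
    rw [hrz, add_zero, mul_comm]
  -- irreducibility
  rcases hirr.isUnit_or_isUnit hdvd with hus | huq
  · -- σ is a unit, so w = 1 ∈ J
    right
    have : σ = 1 := hσm.eq_one_of_isUnit hus
    have hw1 : w = 1 := by rw [← hmap, this, Polynomial.map_one]
    rwa [hw1] at hwJ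
  · -- μ₁ /ₘ σ is a unit
    left
    obtain ⟨v, hv⟩ : ∃ v : Polynomial F, (μ₁ /ₘ σ) * v = 1 := by
      obtain ⟨vu, hvu⟩ := huq
      exact ⟨↑vu⁻¹, by rw [← hvu, Units.mul_inv]⟩
    have hσv : σ = μ₁ * v := by
      calc σ = σ * ((μ₁ /ₘ σ) * v) := by rw [hv, mul_one]
        _ = μ₁ * v := by rw [← mul_assoc, ← hdvd]
    intro x hxJ
    obtain ⟨y', hy'⟩ := hwdvd x hxJ
    refine ⟨y' * (v.map (algebraMap F Δ)), ?_⟩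
    rw [hy', ← hmap, hσv, Polynomial.map_mul, ← hm₁def, mul_assoc]
    congr 1
    -- v.map * m₁ = m₁ * v.map  (both are maps of commuting F-polynomials)
    rw [← Polynomial.map_mul, ← Polynomial.map_mul, mul_comm]


universe u v w

theorem aux_count {D : Type u} [DivisionRing D] {R : Type v} [Ring R] [SMul D R]
    {S₀ : Type w} [AddCommGroup S₀] [Module D S₀] [Module R S₀] [IsScalarTower D R S₀]
    [IsSimpleModule R S₀] (hk : 0 < Module.finrank D S₀) :
    ∀ (n : ℕ) (M : Type w) [AddCommGroup M] [Module D M] [Module R M] [IsScalarTower D R M]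
      [Module.Finite D M], Module.finrank D M = n →
      ((⊤ : Submodule R M) ≤ sSup {L : Submodule R M | L = ⊥ ∨ Nonempty (↥L ≃ₗ[R] S₀)}) →
      Module.finrank D S₀ ∣ n := by
  intro n
  induction n using Nat.strong_induction_on with
  | _ n ih =>
    intro M _ _ _ _ _ hrank htop
    by_cases hn : n = 0
    · simp [hn]
    -- find a nonzero member of the family
    have hnt : Nontrivial M := by
      rw [← Module.finrank_pos_iff (R := D), hrank]
      omega
    have hsne : sSup {L : Submodule R M | L = ⊥ ∨ Nonempty (↥L ≃ₗ[R] S₀)} ≠ ⊥ := by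
      intro h
      rw [h, le_bot_iff] at htop
      exact (bot_ne_top (α := Submodule R M)).symm htop
    obtain ⟨L, hLfam, hL0⟩ : ∃ L ∈ {L : Submodule R M | L = ⊥ ∨ Nonempty (↥L ≃ₗ[R] S₀)},
        L ≠ ⊥ := by
      by_contra h
      push_neg at h
      exact hsne (sSup_eq_bot.mpr h)
    obtain ⟨e⟩ : Nonempty (↥L ≃ₗ[R] S₀) := hLfam.resolve_left hL0
    have hkL : Module.finrank D ↥L = Module.finrank D S₀ :=
      (e.restrictScalars D).finrank_eq
    have hrs : Module.finrank D ↥(L.restrictScalars D) = Module.finrank D ↥L := rfl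
    have hkn : Module.finrank D S₀ ≤ n := by
      rw [← hkL, ← hrs, ← hrank]
      exact Submodule.finrank_le (L.restrictScalars D)
    have hfq : Module.finrank D (M ⧸ L) = n - Module.finrank D S₀ := by
      rw [Submodule.finrank_quotient (R := D) (S := R) L, hrank, hkL]
    -- quotient is finite over D
    have hfin : Module.Finite D (M ⧸ L) :=
      Module.Finite.of_surjective ((L.mkQ).restrictScalars D) (Submodule.mkQ_surjective L)
    -- family condition passes to the quotient
    have htop' : (⊤ : Submodule R (M ⧸ L)) ≤
        sSup {L' : Submodule R (M ⧸ L) | L' = ⊥ ∨ Nonempty (↥L' ≃ₗ[R] S₀)} := by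
      have hmap : ∀ L₁ : Submodule R M, (L₁ = ⊥ ∨ Nonempty (↥L₁ ≃ₗ[R] S₀)) →
          (L₁.map L.mkQ = ⊥ ∨ Nonempty (↥(L₁.map L.mkQ) ≃ₗ[R] S₀)) := by
        intro L₁ h₁
        rcases h₁ with h₁ | he₁
        · left; rw [h₁, Submodule.map_bot]
        · obtain ⟨e₁⟩ := he₁
          set φ : S₀ →ₗ[R] M ⧸ L := L.mkQ ∘ₗ (L₁.subtype ∘ₗ e₁.symm.toLinearMap) with hφ
          have hrange : LinearMap.range φ = L₁.map L.mkQ := by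
            rw [hφ, LinearMap.range_comp, LinearMap.range_comp, LinearEquiv.range,
              Submodule.map_top, Submodule.range_subtype]
          rcases eq_bot_or_eq_top (LinearMap.ker φ) with hker | hker
          · right
            have hinj : Function.Injective φ := LinearMap.ker_eq_bot.mp hker
            exact ⟨((LinearEquiv.ofInjective φ hinj).trans
              (LinearEquiv.ofEq _ _ hrange)).symm⟩
          · left
            rw [← hrange]
            exact LinearMap.range_eq_bot.mpr (LinearMap.ker_eq_top.mp hker)
      calc (⊤ : Submodule R (M ⧸ L)) = Submodule.map L.mkQ ⊤ := by
            rw [Submodule.map_top, Submodule.range_mkQ]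
        _ ≤ _ := by
            rw [Submodule.map_le_iff_le_comap]
            refine le_trans htop (sSup_le fun L₁ hL₁ => ?_)
            rw [← Submodule.map_le_iff_le_comap]
            exact le_sSup (hmap L₁ hL₁)
    have hdvd := ih (n - Module.finrank D S₀) (by omega) (M ⧸ L) hfq htop'
    obtain ⟨c, hc⟩ := hdvd
    exact ⟨c + 1, by rw [Nat.mul_add, ← hc, mul_one]; omega⟩

/-- polynomial with coefficient vector `v` -/
noncomputable def polyOf (n : ℕ) (v : Fin n → Δ) : Polynomial Δ :=
  ∑ i : Fin n, C (v i) * X ^ (i : ℕ)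

theorem polyOf_coeff (n : ℕ) (v : Fin n → Δ) (j : Fin n) : (polyOf n v).coeff j = v j := by
  rw [polyOf, finset_sum_coeff]
  rw [Finset.sum_eq_single j]
  · rw [coeff_C_mul, coeff_X_pow, if_pos rfl, mul_one]
  · intro i _ hij
    rw [coeff_C_mul, coeff_X_pow, if_neg (fun h => hij (Fin.val_injective h.symm)), mul_zero]
  · intro h
    exact absurd (Finset.mem_univ j) h

theorem polyOf_degree (n : ℕ) (v : Fin n → Δ) : (polyOf n v).degree < n := by
  refine lt_of_le_of_lt (degree_sum_le _ _) ?_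
  rw [Finset.sup_lt_iff (by exact_mod_cast WithBot.bot_lt_coe n)]
  intro i _
  calc (C (v i) * X ^ (i : ℕ)).degree ≤ (C (v i)).degree + (X ^ (i : ℕ) : Polynomial Δ).degree :=
        degree_mul_le _ _
    _ ≤ 0 + (i : ℕ) := add_le_add degree_C_le (le_of_eq (degree_X_pow _))
    _ = ((i : ℕ) : WithBot ℕ) := zero_add _
    _ < n := by exact_mod_cast i.isLt

theorem polyOf_eq_zero {n : ℕ} {v : Fin n → Δ} (h : polyOf n v = 0) : v = 0 := by
  funext j
  have := polyOf_coeff n v j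
  rw [h, coeff_zero] at this
  exact this.symm

theorem polyOf_repr {n : ℕ} {r : Polynomial Δ} (hr : r.degree < (n : WithBot ℕ)) :
    polyOf n (fun i => r.coeff i) = r := by
  by_cases h0 : r = 0
  · subst h0
    rw [polyOf]
    simp
  · have hnd : r.natDegree < n := by
      rwa [← natDegree_lt_iff_degree_lt h0] at hr
    rw [polyOf]
    conv_rhs => rw [r.as_sum_range' n hnd]
    rw [← Fin.sum_univ_eq_sum_range (fun i => (monomial i) (r.coeff i)) n]
    exact Finset.sum_congr rfl fun i _ => C_mul_X_pow_eq_monomial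

theorem polyOf_add (n : ℕ) (v w : Fin n → Δ) :
    polyOf n (v + w) = polyOf n v + polyOf n w := by
  rw [polyOf, polyOf, polyOf, ← Finset.sum_add_distrib]
  refine Finset.sum_congr rfl fun i _ => ?_
  rw [Pi.add_apply, C_add, add_mul]

theorem polyOf_smul (n : ℕ) (d : Δ) (v : Fin n → Δ) :
    polyOf n (d • v) = C d * polyOf n v := by
  rw [polyOf, polyOf, Finset.mul_sum]
  refine Finset.sum_congr rfl fun i _ => ?_
  rw [Pi.smul_apply, smul_eq_mul, C_mul, mul_assoc]

end Aux

/-- If `Δ` is a finite-dimensional division algebra with center `F` and `μ(s) ∈ F[s]` is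
irreducible of prime degree with no root in `Δ`, then `Δ[s]/μ(s)Δ[s]` (encoded via the
quotient map `π` from the polynomial ring `Δ[s]`) is a division ring. -/
theorem stmt15 {F : Type*} [Field F] {Δ : Type*} [DivisionRing Δ] [Algebra F Δ]
    [FiniteDimensional F Δ]
    (hcent : ∀ z : Δ, z ∈ Subring.center Δ ↔ ∃ c : F, z = algebraMap F Δ c)
    (μ : Polynomial F) (hirr : Irreducible μ) (hdeg : μ.natDegree.Prime)
    (hroot : ¬ ∃ δ : Δ, Polynomial.aeval δ μ = 0)
    (Q : Type*) [Ring Q] (π : Polynomial Δ →+* Q) (hsurj : Function.Surjective π)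
    (hker : ∀ f : Polynomial Δ, π f = 0 ↔ ∃ g, f = μ.map (algebraMap F Δ) * g) :
    Nontrivial Q ∧ ∀ q : Q, q ≠ 0 → IsUnit q := by
  classical
  set p := μ.natDegree with hp
  have hp2 : 2 ≤ p := hdeg.two_le
  have hinj : Function.Injective (algebraMap F Δ) := (algebraMap F Δ).injective
  have hμ0 : μ ≠ 0 := hirr.ne_zero
  have hlc0 : μ.leadingCoeff ≠ 0 := leadingCoeff_ne_zero.mpr hμ0
  set μ₁ : Polynomial F := μ * C μ.leadingCoeff⁻¹ with hμ₁
  have hμ₁monic : μ₁.Monic := monic_mul_leadingCoeff_inv hμ0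
  have hμ₁irr : Irreducible μ₁ :=
    (irreducible_mul_isUnit (isUnit_C.mpr (isUnit_iff_ne_zero.mpr (inv_ne_zero hlc0)))).mpr hirr
  have hμ₁deg : μ₁.natDegree = p := by
    rw [hμ₁, natDegree_mul hμ0 (by simpa using inv_ne_zero hlc0), natDegree_C, add_zero]
  set m₁ : Polynomial Δ := μ₁.map (algebraMap F Δ) with hm₁
  have hm₁monic : m₁.Monic := hμ₁monic.map _
  have hm₁0 : m₁ ≠ 0 := hm₁monic.ne_zero
  have hm₁deg : m₁.natDegree = p := by
    rw [hm₁, natDegree_map_eq_of_injective hinj, hμ₁deg]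
  -- kernel characterization in terms of m₁
  have hcentm₁ : ∀ x : Polynomial Δ, m₁ * x = x * m₁ := fun x => by
    rw [hm₁]; exact aux_central hcent μ₁ x
  have hcentm : ∀ x : Polynomial Δ, μ.map (algebraMap F Δ) * x = x * μ.map (algebraMap F Δ) :=
    fun x => aux_central hcent μ x
  have hmm₁ : μ.map (algebraMap F Δ) = C (algebraMap F Δ μ.leadingCoeff) * m₁ := by
    rw [hm₁, ← map_C (algebraMap F Δ), ← Polynomial.map_mul]
    congr 1
    rw [hμ₁, mul_comm, mul_assoc, ← C_mul, inv_mul_cancel₀ hlc0, C_1, mul_one]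
  have hm₁m : m₁ = C (algebraMap F Δ μ.leadingCoeff⁻¹) * μ.map (algebraMap F Δ) := by
    rw [hm₁, ← map_C (algebraMap F Δ), ← Polynomial.map_mul]
    congr 1
    rw [hμ₁, mul_comm]
  have hker' : ∀ f : Polynomial Δ, π f = 0 ↔ ∃ y, f = y * m₁ := by
    intro f
    rw [hker f]
    constructor
    · rintro ⟨g, hg⟩
      refine ⟨C (algebraMap F Δ μ.leadingCoeff) * g, ?_⟩
      rw [hg, hmm₁, mul_assoc, hcentm₁ g, ← mul_assoc]
    · rintro ⟨y, hy⟩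
      refine ⟨y * C (algebraMap F Δ μ.leadingCoeff⁻¹), ?_⟩
      rw [hy, hm₁m, ← mul_assoc, ← hcentm (y * C (algebraMap F Δ μ.leadingCoeff⁻¹))]
  have hπ0 : π m₁ = 0 := (hker' m₁).mpr ⟨1, (one_mul m₁).symm⟩
  have hkerdeg : ∀ f : Polynomial Δ, π f = 0 → f ≠ 0 → p ≤ f.natDegree := by
    intro f hf h0
    obtain ⟨y, hy⟩ := (hker' f).mp hf
    have hy0 : y ≠ 0 := by rintro rfl; rw [zero_mul] at hy; exact h0 hy
    rw [hy, natDegree_mul hy0 hm₁0, hm₁deg]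
    omega
  have hQnt : (1 : Q) ≠ 0 := by
    intro h
    have h1 : π 1 = 0 := by rw [map_one, h]
    have := hkerdeg 1 h1 one_ne_zero
    rw [natDegree_one] at this
    omega
  have key : ∀ g h : Polynomial Δ, g.Monic → m₁ = h * g →
      g.natDegree = 0 ∨ g.natDegree = p := by
    by_contra hcon
    push_neg at hcon
    obtain ⟨g₀, h₀, hg₀m, hfac₀, hg₀0, hg₀p⟩ := hcon
    have hg₀ne : g₀ ≠ 0 := hg₀m.ne_zero
    have hh₀ne : h₀ ≠ 0 := by rintro rfl; rw [zero_mul] at hfac₀; exact hm₁0 hfac₀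
    have hg₀lt : g₀.natDegree < p := by
      have hnm := natDegree_mul hh₀ne hg₀ne
      rw [← hfac₀, hm₁deg] at hnm
      omega
    have hg₀pos : 0 < g₀.natDegree := Nat.pos_of_ne_zero hg₀0
    -- minimal degree of a nontrivial monic right factor of m₁
    set dset : Set ℕ :=
      {n | 0 < n ∧ ∃ g h : Polynomial Δ, g.Monic ∧ m₁ = h * g ∧ g.natDegree = n} with hdset
    have hne : dset.Nonempty := ⟨g₀.natDegree, hg₀pos, g₀, h₀, hg₀m, hfac₀, rfl⟩
    set k : ℕ := sInf dset with hkdef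
    obtain ⟨hk0, g, h, hgm, hfac, hgdeg⟩ := Nat.sInf_mem hne
    rw [← hkdef] at hk0 hgdeg
    have hkmin : ∀ g' h' : Polynomial Δ, g'.Monic → m₁ = h' * g' → 0 < g'.natDegree →
        k ≤ g'.natDegree := fun g' h' h1 h2 h3 => Nat.sInf_le ⟨h3, g', h', h1, h2, rfl⟩
    have hkp : k < p := lt_of_le_of_lt (Nat.sInf_le ⟨hg₀pos, g₀, h₀, hg₀m, hfac₀, rfl⟩) hg₀lt
    have hgne : g ≠ 0 := hgm.ne_zero
    have hhne : h ≠ 0 := by rintro rfl; rw [zero_mul] at hfac; exact hm₁0 hfac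
    have hhdeg : h.natDegree + k = p := by
      have hnm := natDegree_mul hhne hgne
      rw [← hfac, hm₁deg, hgdeg] at hnm
      omega
    have hgh : m₁ = g * h := by
      apply mul_left_cancel₀ hhne
      rw [← hcentm₁ h, hfac, mul_assoc]
    -- module structure on Q
    letI instA : Module (Polynomial Δ) Q := Module.compHom Q π
    letI instD : Module Δ Q := Module.compHom Q (π.comp (Polynomial.C : Δ →+* Polynomial Δ))
    have hsmulA : ∀ (a : Polynomial Δ) (x : Q), a • x = π a * x := fun _ _ => rfl
    have hsmulD : ∀ (d : Δ) (x : Q), d • x = π (C d) * x := fun _ _ => rfl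
    haveI : IsScalarTower Δ (Polynomial Δ) Q := ⟨fun d a x => by
      rw [hsmulA, hsmulD, hsmulA, Polynomial.smul_eq_C_mul, map_mul, mul_assoc]⟩
    set πₗ : Polynomial Δ →ₗ[Polynomial Δ] Q :=
      { toFun := fun a => π a
        map_add' := fun a b => map_add π a b
        map_smul' := fun a b => show π (a • b) = a • π b by
          rw [smul_eq_mul, map_mul, hsmulA] } with hπₗdef
    set Φ : Polynomial Δ →ₗ[Polynomial Δ] Q :=
      { toFun := fun a => π (a * h)
        map_add' := fun a b => show π ((a + b) * h) = π (a * h) + π (b * h) by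
          rw [add_mul, map_add]
        map_smul' := fun a b => show π ((a • b) * h) = a • π (b * h) by
          rw [smul_eq_mul, mul_assoc, map_mul, hsmulA] } with hΦdef
    have hΦapp : ∀ a : Polynomial Δ, Φ a = π (a * h) := fun _ => rfl
    set S : Submodule (Polynomial Δ) Q := LinearMap.range Φ with hSdef
    have hπh : π h ≠ 0 := by
      intro hc
      have := hkerdeg h hc hhne
      omega
    have hπhS : π h ∈ S := ⟨1, by rw [hΦapp, one_mul]⟩
    have hSbot : S ≠ ⊥ := by
      intro hS
      rw [hS, Submodule.mem_bot] at hπhS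
      exact hπh hπhS
    -- simplicity of S
    have hsimp : ∀ V : Submodule (Polynomial Δ) Q, V ≤ S → V = ⊥ ∨ V = S := by
      intro V hVS
      by_cases hV0 : V = ⊥
      · exact Or.inl hV0
      right
      set J : Submodule (Polynomial Δ) (Polynomial Δ) := V.comap Φ with hJdef
      have hgJ : g ∈ J := by
        have hΦg : Φ g = 0 := by rw [hΦapp, ← hgh, hπ0]
        show Φ g ∈ V
        rw [hΦg]
        exact V.zero_mem
      obtain ⟨w, hwJ, hwm, hwdvd, hwmin⟩ := aux_min J ⟨g, hgJ, hgne⟩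
      obtain ⟨u, hu⟩ := hwdvd g hgJ
      have hwne : w ≠ 0 := hwm.ne_zero
      have hune : u ≠ 0 := by rintro rfl; rw [zero_mul] at hu; exact hgne hu
      by_cases hw0 : w.natDegree = 0
      · -- w = 1 so J = ⊤ and V = S
        have hw1 : w = 1 := eq_one_of_monic_natDegree_zero hwm hw0
        refine le_antisymm hVS ?_
        rintro x ⟨a, rfl⟩
        have haJ : a ∈ J := by
          have := J.smul_mem a (hw1 ▸ hwJ)
          rwa [smul_eq_mul, mul_one] at this
        exact haJ
      · exfalso
        have hwk : w.natDegree = k := by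
          have hdu := natDegree_mul hune hwne
          rw [← hu, hgdeg] at hdu
          have hk' : k ≤ w.natDegree :=
            hkmin w (h * u) hwm (by rw [hfac, hu, mul_assoc]) (Nat.pos_of_ne_zero hw0)
          omega
        have hu0 : u.natDegree = 0 := by
          have hdu := natDegree_mul hune hwne
          rw [← hu, hgdeg, hwk] at hdu
          omega
        have hulc : u.leadingCoeff * w.leadingCoeff = 1 := by
          rw [← leadingCoeff_mul, ← hu]
          exact hgm
        rw [hwm.leadingCoeff, mul_one] at hulc
        have hu1 : u = 1 := by
          have hc : u.coeff 0 = 1 := by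
            have hcc : u.coeff 0 = u.leadingCoeff := by rw [← hu0]; rfl
            rw [hcc, hulc]
          rw [eq_C_of_natDegree_le_zero (le_of_eq hu0), hc, C_1]
        have hwg : w = g := by rw [hu, hu1, one_mul]
        apply hV0
        rw [eq_bot_iff]
        intro x hxV
        obtain ⟨a, rfl⟩ := hVS hxV
        have haJ : a ∈ J := hxV
        obtain ⟨y, hy⟩ := hwdvd a haJ
        have hΦa : Φ a = 0 := by
          rw [hΦapp]
          refine (hker' _).mpr ⟨y, ?_⟩
          rw [hy, hwg, mul_assoc, ← hgh]
        rw [hΦa]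
        exact Submodule.zero_mem ⊥
    haveI hsimpS : IsSimpleModule (Polynomial Δ) ↥S := by
      haveI : Nontrivial (Submodule (Polynomial Δ) ↥S) := by
        refine ⟨⊥, ⊤, fun hEq => hSbot ?_⟩
        rw [eq_bot_iff]
        intro x hx
        have hmem : (⟨x, hx⟩ : ↥S) ∈ (⊥ : Submodule (Polynomial Δ) ↥S) := by
          rw [hEq]; exact Submodule.mem_top
        rw [Submodule.mem_bot] at hmem
        have : x = 0 := congrArg Subtype.val hmem
        rw [this]
        exact Submodule.zero_mem ⊥
      refine { toIsSimpleOrder := ⟨fun W => ?_⟩ }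
      rcases hsimp (W.map S.subtype) (Submodule.map_subtype_le S W) with hW | hW
      · left
        rw [eq_bot_iff]
        intro x hx
        have : S.subtype x ∈ W.map S.subtype := Submodule.mem_map_of_mem hx
        rw [hW, Submodule.mem_bot] at this
        rw [Submodule.mem_bot]
        exact Subtype.ext this
      · right
        rw [eq_top_iff]
        intro x _
        have hx1 : (x : Q) ∈ W.map S.subtype := by rw [hW]; exact x.2
        obtain ⟨y, hyW, hyx⟩ := hx1
        rwa [show y = x from Subtype.ext hyx] at hyW
    -- the isotypic component
    set fam : Set (Submodule (Polynomial Δ) Q) :=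
      {L | L = ⊥ ∨ Nonempty (↥L ≃ₗ[Polynomial Δ] ↥S)} with hfamdef
    have hSfam : S ∈ fam := Or.inr ⟨LinearEquiv.refl _ _⟩
    set N : Submodule (Polynomial Δ) Q := sSup fam with hNdef
    set ρ : Δ → (Q →ₗ[Polynomial Δ] Q) := fun d =>
      { toFun := fun x => x * π (C d)
        map_add' := fun a b => add_mul a b _
        map_smul' := fun a x => show (a • x) * π (C d) = a • (x * π (C d)) by
          rw [hsmulA, hsmulA, mul_assoc] } with hρdef
    have hρapp : ∀ (d : Δ) (x : Q), ρ d x = x * π (C d) := fun _ _ => rfl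
    have hρfam : ∀ (d : Δ) (L : Submodule (Polynomial Δ) Q), L ∈ fam →
        L.map (ρ d) ∈ fam := by
      intro d L hL
      rcases hL with hL | he₁
      · left; rw [hL, Submodule.map_bot]
      obtain ⟨e₁⟩ := he₁
      set φ : ↥S →ₗ[Polynomial Δ] Q := (ρ d) ∘ₗ (L.subtype ∘ₗ e₁.symm.toLinearMap) with hφdef
      have hrange : LinearMap.range φ = L.map (ρ d) := by
        rw [hφdef, LinearMap.range_comp, LinearMap.range_comp, LinearEquiv.range,
          Submodule.map_top, Submodule.range_subtype]
      rcases eq_bot_or_eq_top (LinearMap.ker φ) with hker₂ | hker₂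
      · right
        have hinj : Function.Injective φ := LinearMap.ker_eq_bot.mp hker₂
        exact ⟨((LinearEquiv.ofInjective φ hinj).trans (LinearEquiv.ofEq _ _ hrange)).symm⟩
      · left
        rw [← hrange]
        exact LinearMap.range_eq_bot.mpr (LinearMap.ker_eq_top.mp hker₂)
    have hNstab : ∀ x : Polynomial Δ, π x ∈ N → ∀ d : Δ, π (x * C d) ∈ N := by
      intro x hx d
      have hle : N ≤ Submodule.comap (ρ d) N :=
        sSup_le fun L hL => Submodule.map_le_iff_le_comap.mp (le_sSup (hρfam d L hL))
      have hmem := hle hx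
      rw [Submodule.mem_comap, hρapp, ← map_mul] at hmem
      exact hmem
    set J' : Submodule (Polynomial Δ) (Polynomial Δ) := N.comap πₗ with hJ'def
    have hπₗapp : ∀ a : Polynomial Δ, πₗ a = π a := fun _ => rfl
    have hm₁J' : m₁ ∈ J' := by
      show πₗ m₁ ∈ N
      rw [hπₗapp, hπ0]
      exact N.zero_mem
    have hstabJ' : ∀ x ∈ J', ∀ d : Δ, x * C d ∈ J' := by
      intro x hx d
      show πₗ (x * C d) ∈ N
      rw [hπₗapp]
      exact hNstab x hx d
    rcases aux_classify hcent hμ₁monic hμ₁irr J' hm₁J' hstabJ' with hall | h1J'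
    · -- h would be a left multiple of m₁ : degree contradiction
      have hSN : S ≤ N := le_sSup hSfam
      have hhJ' : h ∈ J' := by
        show πₗ h ∈ N
        rw [hπₗapp]
        exact hSN hπhS
      obtain ⟨y, hy⟩ := hall h hhJ'
      have hyne : y ≠ 0 := by rintro rfl; rw [zero_mul] at hy; exact hhne hy
      have hnd := natDegree_mul hyne hm₁0
      rw [← hy, hm₁deg] at hnd
      omega
    · -- N = ⊤, so Q is isotypic of type S; count dimensions
      have hNtop : N = ⊤ := by
        rw [eq_top_iff]
        intro x _
        obtain ⟨a, rfl⟩ := hsurj x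
        have h1N : π 1 ∈ N := h1J'
        have hmem := N.smul_mem a h1N
        rwa [hsmulA, map_one, mul_one] at hmem
      -- finrank Δ Q = p
      set ΨQ : (Fin p → Δ) →ₗ[Δ] Q :=
        { toFun := fun v => π (polyOf p v)
          map_add' := fun v w => show π (polyOf p (v + w)) = π (polyOf p v) + π (polyOf p w) by
            rw [polyOf_add, map_add]
          map_smul' := fun d v => show π (polyOf p (d • v)) = d • π (polyOf p v) by
            rw [polyOf_smul, map_mul, hsmulD] } with hΨQdef
      have hΨQapp : ∀ v, ΨQ v = π (polyOf p v) := fun _ => rfl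
      have hker0 : ∀ v : Fin p → Δ, π (polyOf p v) = 0 → v = 0 := by
        intro v hv
        obtain ⟨y, hy⟩ := (hker' _).mp hv
        rcases eq_or_ne y 0 with rfl | hy0
        · rw [zero_mul] at hy
          exact polyOf_eq_zero hy
        · exfalso
          have hpoly0 : polyOf p v ≠ 0 := by
            rw [hy]; exact mul_ne_zero hy0 hm₁0
          have h1 : (polyOf p v).natDegree < p :=
            (natDegree_lt_iff_degree_lt hpoly0).mpr (polyOf_degree p v)
          have h2 := natDegree_mul hy0 hm₁0
          rw [← hy, hm₁deg] at h2
          omega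
      have hΨQinj : Function.Injective ΨQ := by
        rw [← LinearMap.ker_eq_bot]
        rw [LinearMap.ker_eq_bot']
        intro v hv
        exact hker0 v hv
      have hΨQsurj : Function.Surjective ΨQ := by
        intro x
        obtain ⟨a, rfl⟩ := hsurj x
        obtain ⟨q', r, hqr, hdr⟩ := aux_div m₁ hm₁monic a
        rw [degree_eq_natDegree hm₁0, hm₁deg] at hdr
        refine ⟨fun i => r.coeff i, ?_⟩
        rw [hΨQapp, polyOf_repr hdr, hqr, map_add, map_mul, hπ0, mul_zero, zero_add]
      have hfinQ : Module.Finite Δ Q :=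
        Module.Finite.equiv (LinearEquiv.ofBijective ΨQ ⟨hΨQinj, hΨQsurj⟩)
      have hrankQ : Module.finrank Δ Q = p := by
        rw [← (LinearEquiv.ofBijective ΨQ ⟨hΨQinj, hΨQsurj⟩).finrank_eq,
          Module.finrank_fin_fun]
      -- finrank Δ S = k
      set ΨS : (Fin k → Δ) →ₗ[Δ] Q :=
        { toFun := fun v => π (polyOf k v * h)
          map_add' := fun v w => show π (polyOf k (v + w) * h) = π (polyOf k v * h) + π (polyOf k w * h) by
            rw [polyOf_add, add_mul, map_add]
          map_smul' := fun d v => show π (polyOf k (d • v) * h) = d • π (polyOf k v * h) by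
            rw [polyOf_smul, mul_assoc, map_mul, hsmulD] } with hΨSdef
      have hΨSapp : ∀ v, ΨS v = π (polyOf k v * h) := fun _ => rfl
      have hΨSmem : ∀ v, ΨS v ∈ S.restrictScalars Δ := by
        intro v
        show ΨS v ∈ S
        exact ⟨polyOf k v, rfl⟩
      set ΨS' : (Fin k → Δ) →ₗ[Δ] ↥(S.restrictScalars Δ) :=
        LinearMap.codRestrict (S.restrictScalars Δ) ΨS hΨSmem with hΨS'def
      have hΨS'inj : Function.Injective ΨS' := by
        rw [← LinearMap.ker_eq_bot, LinearMap.ker_eq_bot']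
        intro v hv
        have hv0 : ΨS v = 0 := congrArg Subtype.val hv
        rw [hΨSapp] at hv0
        obtain ⟨y, hy⟩ := (hker' _).mp hv0
        -- polyOf k v * h = y * m₁ = y * g * h  ⇒  polyOf k v = y * g
        have hcancel : polyOf k v = y * g := by
          apply mul_right_cancel₀ hhne
          rw [hy, hgh, mul_assoc]
        rcases eq_or_ne y 0 with rfl | hy0
        · rw [zero_mul] at hcancel
          exact polyOf_eq_zero hcancel
        · exfalso
          have hpoly0 : polyOf k v ≠ 0 := by
            rw [hcancel]; exact mul_ne_zero hy0 hgne
          have h1 : (polyOf k v).natDegree < k :=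
            (natDegree_lt_iff_degree_lt hpoly0).mpr (polyOf_degree k v)
          have h2 := natDegree_mul hy0 hgne
          rw [← hcancel, hgdeg] at h2
          omega
      have hΨS'surj : Function.Surjective ΨS' := by
        rintro ⟨x, hx⟩
        obtain ⟨a, rfl⟩ : ∃ a, Φ a = x := hx
        obtain ⟨q', r, hqr, hdr⟩ := aux_div g hgm a
        rw [degree_eq_natDegree hgne, hgdeg] at hdr
        refine ⟨fun i => r.coeff i, ?_⟩
        apply Subtype.ext
        show π (polyOf k (fun i => r.coeff i) * h) = Φ a
        rw [polyOf_repr hdr, hΦapp, hqr, add_mul, map_add, mul_assoc, ← hgh, map_mul]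
        rw [map_mul, hπ0, mul_zero, zero_add]
      have hrankS : Module.finrank Δ ↥S = k := by
        have : Module.finrank Δ ↥(S.restrictScalars Δ) = Module.finrank Δ ↥S := rfl
        rw [← this, ← (LinearEquiv.ofBijective ΨS' ⟨hΨS'inj, hΨS'surj⟩).finrank_eq,
          Module.finrank_fin_fun]
      -- apply the counting lemma
      have hkpos : 0 < Module.finrank Δ ↥S := by rw [hrankS]; exact hk0
      have htopfam : (⊤ : Submodule (Polynomial Δ) Q) ≤
          sSup {L : Submodule (Polynomial Δ) Q |
            L = ⊥ ∨ Nonempty (↥L ≃ₗ[Polynomial Δ] ↥S)} := by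
        rw [← hfamdef, ← hNdef, hNtop]
      have hdvd : Module.finrank Δ ↥S ∣ p := aux_count hkpos p Q hrankQ htopfam
      rw [hrankS] at hdvd
      have hk1 : k = 1 := by
        rcases (Nat.Prime.eq_one_or_self_of_dvd hdeg k hdvd) with h1 | h1
        · exact h1
        · omega
      -- degree-one right factor gives a root of μ in Δ
      have hgdeg1 : g.natDegree = 1 := by rw [hgdeg, hk1]
      obtain ⟨δ, hgX⟩ : ∃ δ : Δ, g = X - C δ :=
        ⟨-(g.coeff 0), by rw [map_neg, sub_neg_eq_add]; exact hgm.eq_X_add_C hgdeg1⟩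
      have heval : m₁.eval δ = 0 := by
        rw [hfac, hgX]
        exact eval_mul_X_sub_C _
      have haeval : Polynomial.aeval δ μ₁ = 0 := by
        rw [aeval_def, ← eval_map, ← hm₁]
        exact heval
      have hμback : μ = μ₁ * C μ.leadingCoeff := by
        rw [hμ₁, mul_assoc, ← C_mul, inv_mul_cancel₀ hlc0, C_1, mul_one]
      refine hroot ⟨δ, ?_⟩
      rw [hμback, map_mul, haeval, zero_mul]
  refine ⟨nontrivial_of_ne 1 0 hQnt, ?_⟩
  have leftinv : ∀ f' : Polynomial Δ, π f' ≠ 0 → ∃ u : Q, u * π f' = 1 := by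
    intro f' hf'
    set J : Submodule (Polynomial Δ) (Polynomial Δ) :=
      Submodule.span (Polynomial Δ) {f', m₁} with hJ
    have hfJ : f' ∈ J := Submodule.subset_span (by simp)
    have hmJ : m₁ ∈ J := Submodule.subset_span (by simp)
    obtain ⟨w, hwJ, hwm, hwdvd, _⟩ := aux_min J ⟨m₁, hmJ, hm₁0⟩
    obtain ⟨h', hh'⟩ := hwdvd m₁ hmJ
    rcases key w h' hwm hh' with h0 | hpw
    · have hw1 : w = 1 := eq_one_of_monic_natDegree_zero hwm h0
      have h1J : (1 : Polynomial Δ) ∈ J := hw1 ▸ hwJ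
      obtain ⟨u, v, huv⟩ := Submodule.mem_span_pair.mp h1J
      refine ⟨π u, ?_⟩
      have hπuv := congrArg π huv
      rw [map_add, smul_eq_mul, smul_eq_mul, map_mul, map_mul, hπ0, mul_zero, add_zero,
        map_one] at hπuv
      exact hπuv
    · exfalso
      obtain ⟨y, hy⟩ := hwdvd f' hfJ
      have hw0 : w ≠ 0 := hwm.ne_zero
      have hh'0 : h' ≠ 0 := by rintro rfl; rw [zero_mul] at hh'; exact hm₁0 hh'
      have hdeq : p = h'.natDegree + w.natDegree := by
        rw [← hm₁deg, hh', natDegree_mul hh'0 hw0]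
      have hd0 : h'.natDegree = 0 := by omega
      obtain ⟨e, he⟩ : ∃ e, h' = C e := ⟨_, eq_C_of_natDegree_le_zero (le_of_eq hd0)⟩
      have he0 : e ≠ 0 := by
        rintro rfl; rw [C_0] at he; exact hh'0 he
      apply hf'
      refine (hker' f').mpr ⟨y * C e⁻¹, ?_⟩
      have hwm₁ : w = C e⁻¹ * m₁ := by
        rw [hh', he, ← mul_assoc, ← C_mul, inv_mul_cancel₀ he0, C_1, one_mul]
      rw [hy, hwm₁, mul_assoc]
  intro q hq
  obtain ⟨f, rfl⟩ := hsurj q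
  obtain ⟨u, hu⟩ := leftinv f hq
  obtain ⟨x, rfl⟩ := hsurj u
  have hx0 : π x ≠ 0 := by
    intro h; rw [h, zero_mul] at hu; exact hQnt hu.symm
  obtain ⟨v, hv⟩ := leftinv x hx0
  have hvf : v = π f := by
    calc v = v * (π x * π f) := by rw [hu, mul_one]
      _ = (v * π x) * π f := by rw [mul_assoc]
      _ = π f := by rw [hv, one_mul]
  exact ⟨⟨π f, π x, by rw [← hvf]; exact hv, hu⟩, rfl⟩
end

section
/- Let Δ be a finite-dimensional central division algebra over F and K = F[s]/μ(s)F[s] a field extension of F of prime degree q, with μ irreducible over F. If Δ ⊗_F K is not a division algebra, then K embeds as a subfield of Δ; in particular μ(s) has a root in Δ. -/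
open scoped TensorProduct
open Module

namespace Stmt16Aux

variable {F : Type*} [Field F] {Δ : Type*} [DivisionRing Δ] [Algebra F Δ]
    {K : Type*} [Field K] [Algebra F K]

lemma smul_eq_mul' (d : Δ) (t : Δ ⊗[F] K) : d • t = (d ⊗ₜ[F] (1:K)) * t := by
  induction t using TensorProduct.induction_on with
  | zero => simp
  | tmul x y => rw [Algebra.TensorProduct.tmul_mul_tmul, TensorProduct.smul_tmul']; simp
  | add x y hx hy => rw [mul_add, smul_add, hx, hy]

/-- Right multiplication by `a` as a `Δ`-linear map. -/
noncomputable def rmul (a : Δ ⊗[F] K) : (Δ ⊗[F] K) →ₗ[Δ] (Δ ⊗[F] K) where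
  toFun v := v * a
  map_add' x y := add_mul x y a
  map_smul' d v := by
    simp only [RingHom.id_apply]
    rw [smul_eq_mul', smul_eq_mul', mul_assoc]

@[simp] lemma rmul_apply (a v : Δ ⊗[F] K) : rmul a v = v * a := rfl

/-- A left ideal (as a `Δ`-submodule closed under left multiplication). -/
def IsLI (J : Submodule Δ (Δ ⊗[F] K)) : Prop := ∀ a : Δ ⊗[F] K, ∀ v ∈ J, a * v ∈ J

lemma repr_mul_right {ι : Type*} (b : Basis ι F K) (t : Δ ⊗[F] K) (d : Δ) (i : ι) :
    (Algebra.TensorProduct.basis Δ b).repr (t * (d ⊗ₜ[F] (1:K))) i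
      = (Algebra.TensorProduct.basis Δ b).repr t i * d := by
  induction t using TensorProduct.induction_on with
  | zero => simp
  | tmul x y =>
      rw [Algebra.TensorProduct.tmul_mul_tmul, mul_one]
      simp only [Algebra.TensorProduct.basis_repr_tmul, Finsupp.smul_apply,
        Finsupp.mapRange_apply, smul_eq_mul]
      rw [mul_assoc, mul_assoc, Algebra.commutes ((b.repr y) i) d]
  | add x y hx hy => simp [mul_add, add_mul, hx, hy]

/-- `Δ ⊗[F] K` is a simple ring. -/
lemma simplicity [FiniteDimensional F K]
    (hcent : ∀ z : Δ, z ∈ Subring.center Δ ↔ ∃ c : F, z = algebraMap F Δ c)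
    (N : Submodule Δ (Δ ⊗[F] K))
    (hl : ∀ a : Δ ⊗[F] K, ∀ v ∈ N, a * v ∈ N)
    (hr : ∀ a : Δ ⊗[F] K, ∀ v ∈ N, v * a ∈ N)
    (hne : N ≠ ⊥) : N = ⊤ := by
  classical
  set b : Basis (Fin (finrank F K)) F K := Module.finBasis F K with hb
  set B : Basis (Fin (finrank F K)) Δ (Δ ⊗[F] K) := Algebra.TensorProduct.basis Δ b with hB
  obtain ⟨t₀, ht₀N, ht₀⟩ := Submodule.exists_mem_ne_zero_of_ne_bot hne
  set S : Set ℕ := {n | ∃ v ∈ N, v ≠ 0 ∧ (B.repr v).support.card = n} with hS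
  have hSne : S.Nonempty := ⟨_, t₀, ht₀N, ht₀, rfl⟩
  obtain ⟨t₁, ht₁N, ht₁0, ht₁card⟩ := Nat.sInf_mem hSne
  have hsupp : ((B.repr t₁).support).Nonempty := by
    rw [Finsupp.support_nonempty_iff]
    simpa using ht₁0
  obtain ⟨i₀, hi₀⟩ := hsupp
  have hc0 : B.repr t₁ i₀ ≠ 0 := Finsupp.mem_support_iff.mp hi₀
  set t : Δ ⊗[F] K := (B.repr t₁ i₀)⁻¹ • t₁ with ht
  have htN : t ∈ N := N.smul_mem _ ht₁N
  have ht0 : t ≠ 0 := by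
    simp only [ht, smul_ne_zero_iff]
    exact ⟨inv_ne_zero hc0, ht₁0⟩
  have hreprt : B.repr t = (B.repr t₁ i₀)⁻¹ • B.repr t₁ := by
    rw [ht, map_smul]
  have hsuppt : (B.repr t).support = (B.repr t₁).support := by
    rw [hreprt]; exact Finsupp.support_smul_eq (inv_ne_zero hc0)
  have hti₀ : B.repr t i₀ = 1 := by
    rw [hreprt, Finsupp.smul_apply, smul_eq_mul, inv_mul_cancel₀ hc0]
  have hcentral : ∀ i, B.repr t i ∈ Subring.center Δ := by
    intro i
    rw [Subring.mem_center_iff]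
    intro d
    by_cases hi : i ∈ (B.repr t).support
    · set u : Δ ⊗[F] K := d • t - t * (d ⊗ₜ[F] (1:K)) with hu
      have huN : u ∈ N := sub_mem (N.smul_mem d htN) (hr _ _ htN)
      have hrepru : ∀ j, B.repr u j = d * B.repr t j - B.repr t j * d := by
        intro j
        rw [hu, map_sub, Finsupp.sub_apply, map_smul, Finsupp.smul_apply, smul_eq_mul,
          repr_mul_right]
      have hsuppu : (B.repr u).support ⊆ (B.repr t).support.erase i₀ := by
        intro j hj
        rw [Finsupp.mem_support_iff, hrepru] at hj
        rw [Finset.mem_erase, Finsupp.mem_support_iff]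
        constructor
        · rintro rfl
          rw [hti₀, mul_one, one_mul, sub_self] at hj
          exact hj rfl
        · intro h0
          rw [h0, mul_zero, zero_mul, sub_self] at hj
          exact hj rfl
      have hu0 : u = 0 := by
        by_contra h0
        have hcard : (B.repr u).support.card < sInf S := by
          calc (B.repr u).support.card ≤ ((B.repr t).support.erase i₀).card :=
                Finset.card_le_card hsuppu
            _ < (B.repr t).support.card := by
                apply Finset.card_erase_lt_of_mem
                rw [hsuppt]; exact hi₀
            _ = sInf S := by rw [hsuppt, ht₁card]
        exact absurd (Nat.sInf_le (show (B.repr u).support.card ∈ S from ⟨u, huN, h0, rfl⟩))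
          (Nat.not_le.mpr hcard)
      have h := (hrepru i).symm
      rw [hu0, map_zero, Finsupp.zero_apply, sub_eq_zero] at h
      exact h
    · rw [Finsupp.notMem_support_iff] at hi
      rw [hi, mul_zero, zero_mul]
  choose f hf using fun i => (hcent _).mp (hcentral i)
  set k : K := ∑ i, f i • b i with hk
  have htk : t = (1:Δ) ⊗ₜ[F] k := by
    conv_lhs => rw [← B.sum_repr t]
    rw [hk, TensorProduct.tmul_sum]
    refine Finset.sum_congr rfl fun i _ => ?_
    rw [hf i, hB, Algebra.TensorProduct.basis_apply, algebraMap_smul,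
      TensorProduct.tmul_smul]
  have hk0 : k ≠ 0 := by
    intro h0
    rw [h0, TensorProduct.tmul_zero] at htk
    exact ht0 htk
  have h1 : (1 : Δ ⊗[F] K) ∈ N := by
    have := hl ((1:Δ) ⊗ₜ[F] k⁻¹) t htN
    rwa [htk, Algebra.TensorProduct.tmul_mul_tmul, one_mul, inv_mul_cancel₀ hk0,
      ← Algebra.TensorProduct.one_def] at this
  rw [eq_top_iff]
  intro a _
  have := hr a 1 h1
  rwa [one_mul] at this

/-- Counting: the minimal dimension of a nonzero left ideal divides the dimension. -/
lemma dvd_finrank [FiniteDimensional F K]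
    (hcent : ∀ z : Δ, z ∈ Subring.center Δ ↔ ∃ c : F, z = algebraMap F Δ c)
    (I : Submodule Δ (Δ ⊗[F] K)) (hILI : IsLI I) (hIbot : I ≠ ⊥)
    (hmin : ∀ J : Submodule Δ (Δ ⊗[F] K), IsLI J → J ≠ ⊥ → finrank Δ I ≤ finrank Δ J) :
    finrank Δ I ∣ finrank Δ (Δ ⊗[F] K) := by
  classical
  haveI : FiniteDimensional Δ (Δ ⊗[F] K) :=
    Module.Finite.of_basis (Algebra.TensorProduct.basis Δ (Module.finBasis F K))
  have hm1 : 1 ≤ finrank Δ I := by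
    by_contra h
    push_neg at h
    interval_cases h' : finrank Δ I
    exact hIbot (Submodule.finrank_eq_zero.mp h')
  have key : ∀ n : ℕ, ∀ J : Submodule Δ (Δ ⊗[F] K), IsLI J → J ≠ ⊥ →
      finrank Δ I ∣ finrank Δ J →
      finrank Δ (Δ ⊗[F] K) - finrank Δ J ≤ n →
      finrank Δ I ∣ finrank Δ (Δ ⊗[F] K) := by
    intro n
    induction n with
    | zero =>
      intro J hJ hJbot hdvd hle
      have h1 : finrank Δ J ≤ finrank Δ (Δ ⊗[F] K) := J.finrank_le
      have h2 : finrank Δ J = finrank Δ (Δ ⊗[F] K) := by omega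
      rwa [h2] at hdvd
    | succ n ih =>
      intro J hJ hJbot hdvd hle
      by_cases hJtop : J = ⊤
      · have : finrank Δ J = finrank Δ (Δ ⊗[F] K) := by rw [hJtop, finrank_top]
        rwa [this] at hdvd
      have hex : ∃ a : Δ ⊗[F] K, ¬ I.map (rmul a) ≤ J := by
        by_contra h
        push_neg at h
        set N : Submodule Δ (Δ ⊗[F] K) :=
          Submodule.span Δ {v | ∃ i ∈ I, ∃ a, v = i * a} with hN
        have hNleJ : N ≤ J := by
          rw [hN, Submodule.span_le]
          rintro v ⟨i, hi, a, rfl⟩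
          exact h a ⟨i, hi, rfl⟩
        have hNr : ∀ x : Δ ⊗[F] K, ∀ v ∈ N, v * x ∈ N := by
          intro x v hv
          induction hv using Submodule.span_induction with
          | mem v hv =>
            obtain ⟨i, hi, a', rfl⟩ := hv
            exact Submodule.subset_span ⟨i, hi, a' * x, (mul_assoc _ _ _)⟩
          | zero => rw [zero_mul]; exact N.zero_mem
          | add u w _ _ hu hw => rw [add_mul]; exact add_mem hu hw
          | smul d v _ hv =>
            rw [smul_eq_mul', mul_assoc, ← smul_eq_mul']
            exact N.smul_mem d hv
        have hNl : ∀ v ∈ N, ∀ x : Δ ⊗[F] K, x * v ∈ N := by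
          intro v hv
          induction hv using Submodule.span_induction with
          | mem v hv =>
            intro x
            obtain ⟨i, hi, a', rfl⟩ := hv
            rw [← mul_assoc]
            exact Submodule.subset_span ⟨x * i, hILI x i hi, a', rfl⟩
          | zero => intro x; rw [mul_zero]; exact N.zero_mem
          | add u w _ _ hu hw => intro x; rw [mul_add]; exact add_mem (hu x) (hw x)
          | smul d v _ hv =>
            intro x
            rw [smul_eq_mul', ← mul_assoc]
            exact hv _
        have hN0 : N ≠ ⊥ := by
          obtain ⟨i₀, hi₀I, hi₀⟩ := Submodule.exists_mem_ne_zero_of_ne_bot hIbot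
          intro h0
          have : i₀ ∈ N := Submodule.subset_span ⟨i₀, hi₀I, 1, (mul_one _).symm⟩
          rw [h0, Submodule.mem_bot] at this
          exact hi₀ this
        have htop := simplicity hcent N (fun a v hv => hNl v hv a) hNr hN0
        exact hJtop (top_unique (htop ▸ hNleJ))
      obtain ⟨a, ha⟩ := hex
      set Ia : Submodule Δ (Δ ⊗[F] K) := I.map (rmul a) with hIa
      have hIaLI : IsLI Ia := by
        rintro x v ⟨i, hi, rfl⟩
        exact ⟨x * i, hILI x i hi, by rw [rmul_apply, rmul_apply, mul_assoc]⟩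
      have hIabot : Ia ≠ ⊥ := fun h0 => ha (h0 ▸ bot_le)
      have hIale : finrank Δ Ia ≤ finrank Δ I := Submodule.finrank_map_le _ _
      have hIam : finrank Δ Ia = finrank Δ I :=
        le_antisymm hIale (hmin Ia hIaLI hIabot)
      have hdisj : Ia ⊓ J = ⊥ := by
        by_contra h0
        have hL : IsLI (Ia ⊓ J) := fun x v hv =>
          ⟨hIaLI x v hv.1, hJ x v hv.2⟩
        have h1 : finrank Δ I ≤ finrank Δ (Ia ⊓ J : Submodule Δ (Δ ⊗[F] K)) :=
          hmin _ hL h0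
        have h2 : finrank Δ (Ia ⊓ J : Submodule Δ (Δ ⊗[F] K)) ≤ finrank Δ Ia :=
          Submodule.finrank_mono inf_le_left
        have : Ia ⊓ J = Ia := Submodule.eq_of_le_of_finrank_le inf_le_left (by omega)
        exact ha (le_trans (le_of_eq this.symm) inf_le_right)
      set J' : Submodule Δ (Δ ⊗[F] K) := J ⊔ Ia with hJ'
      have hJ'LI : IsLI J' := by
        intro x v hv
        rw [hJ', Submodule.mem_sup] at hv ⊢
        obtain ⟨u, hu, w, hw, rfl⟩ := hv
        exact ⟨x * u, hJ x u hu, x * w, hIaLI x w hw, (mul_add x u w).symm⟩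
      have hJ'rank : finrank Δ J' = finrank Δ J + finrank Δ I := by
        have := Submodule.finrank_sup_add_finrank_inf_eq J Ia
        rw [inf_comm] at hdisj
        rw [hdisj, finrank_bot, add_zero] at this
        rw [hJ', this, hIam]
      have hJ'bot : J' ≠ ⊥ := by
        intro h0
        exact hJbot (le_bot_iff.mp (h0 ▸ (le_sup_left : J ≤ J')))
      have hle' : finrank Δ (Δ ⊗[F] K) - finrank Δ J' ≤ n := by
        rw [hJ'rank]; omega
      exact ih J' hJ'LI hJ'bot (by rw [hJ'rank]; exact dvd_add hdvd dvd_rfl) hle'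
  exact key (finrank Δ (Δ ⊗[F] K)) I hILI hIbot dvd_rfl (by omega)

/-- Endgame: a one-dimensional left ideal yields an algebra embedding `K →ₐ[F] Δ`. -/
lemma exists_algHom_of_finrank_one [FiniteDimensional F K]
    (I : Submodule Δ (Δ ⊗[F] K)) (hILI : IsLI I) (hI1 : finrank Δ I = 1) :
    Nonempty (K →ₐ[F] Δ) := by
  classical
  haveI : FiniteDimensional Δ (Δ ⊗[F] K) :=
    Module.Finite.of_basis (Algebra.TensorProduct.basis Δ (Module.finBasis F K))
  have hIbot : I ≠ ⊥ := by
    intro h0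
    rw [h0, finrank_bot] at hI1
    omega
  obtain ⟨s, hsI, hs0⟩ := Submodule.exists_mem_ne_zero_of_ne_bot hIbot
  have hspan : Submodule.span Δ {s} = I := by
    apply Submodule.eq_of_le_of_finrank_le
    · rw [Submodule.span_le, Set.singleton_subset_iff]; exact hsI
    · rw [hI1, finrank_span_singleton hs0]
  have hex : ∀ y : K, ∃ d : Δ, ((1:Δ) ⊗ₜ[F] y) * s = d • s := by
    intro y
    have : ((1:Δ) ⊗ₜ[F] y) * s ∈ I := hILI _ s hsI
    rw [← hspan, Submodule.mem_span_singleton] at this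
    obtain ⟨d, hd⟩ := this
    exact ⟨d, hd.symm⟩
  choose g hg using hex
  have huniq : ∀ (y : K) (d : Δ), ((1:Δ) ⊗ₜ[F] y) * s = d • s → g y = d := by
    intro y d hd
    have h := (hg y).symm.trans hd
    by_contra hne
    have h2 : (g y - d) • s = 0 := by rw [sub_smul, h, sub_self]
    have h3 : g y - d ≠ 0 := sub_ne_zero_of_ne hne
    apply hs0
    calc s = (g y - d)⁻¹ • ((g y - d) • s) := by rw [inv_smul_smul₀ h3]
      _ = 0 := by rw [h2, smul_zero]
  have hcommute : ∀ (d : Δ) (y : K) (v : Δ ⊗[F] K),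
      ((1:Δ) ⊗ₜ[F] y) * (d • v) = d • (((1:Δ) ⊗ₜ[F] y) * v) := by
    intro d y v
    rw [smul_eq_mul', smul_eq_mul', ← mul_assoc, ← mul_assoc,
      Algebra.TensorProduct.tmul_mul_tmul, Algebra.TensorProduct.tmul_mul_tmul,
      one_mul, mul_one, one_mul, mul_one]
  refine ⟨{ toFun := g, map_one' := ?_, map_mul' := ?_, map_zero' := ?_,
            map_add' := ?_, commutes' := ?_ }⟩
  · apply huniq
    rw [← Algebra.TensorProduct.one_def, one_mul, one_smul]
  · intro y y'
    apply huniq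
    have h1 : (1:Δ) ⊗ₜ[F] (y * y') = ((1:Δ) ⊗ₜ[F] y') * ((1:Δ) ⊗ₜ[F] y) := by
      rw [Algebra.TensorProduct.tmul_mul_tmul, one_mul, mul_comm y' y]
    rw [h1, mul_assoc, hg y, hcommute, hg y', smul_smul]
  · apply huniq
    rw [TensorProduct.tmul_zero, zero_mul, zero_smul]
  · intro y y'
    apply huniq
    rw [TensorProduct.tmul_add, add_mul, hg y, hg y', add_smul]
  · intro c
    apply huniq
    have h1 : (1:Δ) ⊗ₜ[F] (algebraMap F K c) = c • ((1:Δ) ⊗ₜ[F] (1:K)) := by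
      rw [← TensorProduct.tmul_smul, Algebra.smul_def, mul_one]
    rw [h1, ← Algebra.TensorProduct.one_def, smul_mul_assoc, one_mul, algebraMap_smul]

end Stmt16Aux

open Stmt16Aux in
/-- If `Δ` is a finite-dimensional division algebra with center `F` and
`K = F[s]/μ(s)F[s]` is a field extension of prime degree (`μ` irreducible over `F`,
with root `θ` generating `K`), and `Δ ⊗_F K` is not a division ring, then `K` embeds as
a subfield of `Δ`; in particular `μ(s)` has a root in `Δ`. -/
theorem stmt16 {F : Type*} [Field F] {Δ : Type*} [DivisionRing Δ] [Algebra F Δ]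
    [FiniteDimensional F Δ]
    (hcent : ∀ z : Δ, z ∈ Subring.center Δ ↔ ∃ c : F, z = algebraMap F Δ c)
    {K : Type*} [Field K] [Algebra F K] [FiniteDimensional F K]
    (hq : (Module.finrank F K).Prime)
    (μ : Polynomial F) (hirr : Irreducible μ) (hdeg : μ.natDegree = Module.finrank F K)
    (hθ : ∃ θ : K, Polynomial.aeval θ μ = 0)
    (hnd : ¬ ∀ t : Δ ⊗[F] K, t ≠ 0 → IsUnit t) :
    (∃ f : K →ₐ[F] Δ, Function.Injective f) ∧ ∃ δ : Δ, Polynomial.aeval δ μ = 0 := by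
  classical
  push_neg at hnd
  obtain ⟨t, ht0, htnu⟩ := hnd
  haveI : FiniteDimensional Δ (Δ ⊗[F] K) :=
    Module.Finite.of_basis (Algebra.TensorProduct.basis Δ (Module.finBasis F K))
  have hqA : Module.finrank Δ (Δ ⊗[F] K) = Module.finrank F K := by
    rw [Module.finrank_eq_card_basis (Algebra.TensorProduct.basis Δ (Module.finBasis F K)),
      Fintype.card_fin]
  set J₀ : Submodule Δ (Δ ⊗[F] K) := LinearMap.range (rmul t) with hJ₀
  have hJ₀LI : IsLI J₀ := by
    rintro a v ⟨u, rfl⟩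
    exact ⟨a * u, by rw [rmul_apply, rmul_apply, mul_assoc]⟩
  have htJ₀ : t ∈ J₀ := ⟨1, one_mul t⟩
  have hJ₀bot : J₀ ≠ ⊥ := by
    intro h
    rw [h, Submodule.mem_bot] at htJ₀
    exact ht0 htJ₀
  have hJ₀top : J₀ ≠ ⊤ := by
    intro h
    have h1 : (1 : Δ ⊗[F] K) ∈ J₀ := by rw [h]; trivial
    obtain ⟨u, hu⟩ := h1
    rw [rmul_apply] at hu
    apply htnu
    have hsurj : Function.Surjective (LinearMap.mulRight F t) := by
      intro v
      refine ⟨v * u, ?_⟩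
      rw [LinearMap.mulRight_apply, mul_assoc, hu, mul_one]
    have hinj := (LinearMap.injective_iff_surjective).mpr hsurj
    have h2 : t * u = 1 := by
      have h3 : LinearMap.mulRight F t (t * u - 1) = LinearMap.mulRight F t 0 := by
        rw [LinearMap.mulRight_apply, LinearMap.mulRight_apply, sub_mul, one_mul,
          mul_assoc, hu, mul_one, sub_self, zero_mul]
      have h4 := hinj h3
      rwa [sub_eq_zero] at h4
    exact ⟨⟨t, u, h2, hu⟩, rfl⟩
  set P : Set ℕ := {n | ∃ J : Submodule Δ (Δ ⊗[F] K),
    IsLI J ∧ J ≠ ⊥ ∧ J ≠ ⊤ ∧ Module.finrank Δ J = n} with hP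
  have hPne : P.Nonempty := ⟨_, J₀, hJ₀LI, hJ₀bot, hJ₀top, rfl⟩
  obtain ⟨I, hILI, hIbot, hItop, hIrank⟩ := Nat.sInf_mem hPne
  have hJ₀lt : Module.finrank Δ J₀ < Module.finrank F K := by
    rw [← hqA]
    exact Submodule.finrank_lt hJ₀top
  have hImin : Module.finrank Δ I ≤ Module.finrank Δ J₀ := by
    rw [hIrank]
    exact Nat.sInf_le (show Module.finrank Δ J₀ ∈ P from ⟨J₀, hJ₀LI, hJ₀bot, hJ₀top, rfl⟩)
  have hmin : ∀ J : Submodule Δ (Δ ⊗[F] K), IsLI J → J ≠ ⊥ →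
      Module.finrank Δ I ≤ Module.finrank Δ J := by
    intro J hJ hJb
    by_cases hJt : J = ⊤
    · rw [hJt, finrank_top, hqA]
      omega
    · rw [hIrank]
      exact Nat.sInf_le (show Module.finrank Δ J ∈ P from ⟨J, hJ, hJb, hJt, rfl⟩)
  have hdvd := dvd_finrank hcent I hILI hIbot hmin
  rw [hqA] at hdvd
  have hm1 : Module.finrank Δ I = 1 := by
    rcases hq.eq_one_or_self_of_dvd _ hdvd with h | h
    · exact h
    · omega
  obtain ⟨f⟩ := exists_algHom_of_finrank_one I hILI hm1
  obtain ⟨θ, hθ0⟩ := hθ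
  refine ⟨⟨f, f.toRingHom.injective⟩, f θ, ?_⟩
  rw [Polynomial.aeval_algHom_apply, hθ0, map_zero]
end
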